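/- arXiv:1404.4064 — 3 statements merged into one kernel-verified Lean document; each statement's English description precedes it below -/
import Mathlib

section
/- Let G_1,…,G_m (vertex sets X_1,…,X_m) be m distinct K_n-graphs freely contained in a binomial B(n+1)-configuration M = (S,L). Set Z_i = X_i ∖ ⋃_{k≠i} X_k and Z = S ∖ ⋃_i X_i. Then: |Z_i| = n - m + 1 for each i; |Z| = binomial(n+1-m, 2); every line of M contained in no side-set of any G_i lies entirely within Z; every line of M meeting Z in at least two points is disjoint from all X_i; and the number of such lines is binomial(n+1-m, 3). Consequently (Z, {L ∈ L : L ⊆ Z}) is a binomial B(n+1-m)-configuration regularly contained in M. -/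
open Finset

/-- A partial Steiner triple system: a finite incidence structure given by its
set of lines (3-element subsets of the point set) such that two distinct
points lie on at most one common line. -/
structure PSTS (S : Type) where
  lines : Finset (Finset S)
  card3 : ∀ L ∈ lines, L.card = 3
  unique : ∀ L₁ ∈ lines, ∀ L₂ ∈ lines, ∀ a b : S, a ≠ b →
    a ∈ L₁ → b ∈ L₁ → a ∈ L₂ → b ∈ L₂ → L₁ = L₂

/-- The rank of a point: the number of lines through it. -/
def pointRank {S : Type} [DecidableEq S] (M : PSTS S) (p : S) : ℕ :=
  (M.lines.filter (fun L => p ∈ L)).card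

/-- A binomial B(m)-configuration: C(m,2) points, each of rank m-2, and C(m,3) lines. -/
def IsBinomial {S : Type} [Fintype S] [DecidableEq S] (M : PSTS S) (m : ℕ) : Prop :=
  Fintype.card S = Nat.choose m 2 ∧ M.lines.card = Nat.choose m 3 ∧
    ∀ p : S, pointRank M p = m - 2

/-- `L` is a side of the complete graph on `X`: a line of `M` meeting `X` in
exactly two points (the extension of an edge of `K_X`). -/
def IsSide {S : Type} [DecidableEq S] (M : PSTS S) (X L : Finset S) : Prop :=
  L ∈ M.lines ∧ (L ∩ X).card = 2

instance {S : Type} [DecidableEq S] (M : PSTS S) (X L : Finset S) :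
    Decidable (IsSide M X L) := by
  unfold IsSide; infer_instance

/-- The complete graph on the vertex set `X` is freely contained in `M`:
every edge of `K_X` extends to a (necessarily unique) line of `M` which meets
`X` in exactly two points (hence distinct edges extend to distinct lines), and
two distinct sides never meet outside `X`. -/
def FreelyContains {S : Type} [DecidableEq S] (M : PSTS S) (X : Finset S) : Prop :=
  (∀ a ∈ X, ∀ b ∈ X, a ≠ b → ∃ L ∈ M.lines, a ∈ L ∧ b ∈ L ∧ (L ∩ X).card = 2) ∧
  (∀ L₁ L₂ : Finset S, IsSide M X L₁ → IsSide M X L₂ → L₁ ≠ L₂ →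
    ∀ p, p ∈ L₁ → p ∈ L₂ → p ∈ X)

/-- `(Z,G)` is a B(m)-configuration regularly contained in `M` (a subspace):
the lines of `G` are lines of `M` lying in `Z`, every line of `M` meeting `Z`
in at least two points belongs to `G`, and `(Z,G)` has the binomial B(m) parameters. -/
def RegularBinomialSub {S : Type} [DecidableEq S] (M : PSTS S)
    (Z : Finset S) (G : Finset (Finset S)) (m : ℕ) : Prop :=
  G ⊆ M.lines ∧ (∀ L ∈ G, L ⊆ Z) ∧
  (∀ L ∈ M.lines, 2 ≤ (L ∩ Z).card → L ∈ G) ∧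
  Z.card = Nat.choose m 2 ∧ G.card = Nat.choose m 3 ∧
  ∀ p ∈ Z, (G.filter (fun L => p ∈ L)).card = m - 2

/-- The lines of the combinatorial Grassmannian G(Y,2): triples of 2-subsets
of `Y` contained in a common 3-subset. -/
def GrasLines (Y : Type) [Fintype Y] [DecidableEq Y] :
    Finset (Finset {e : Finset Y // e.card = 2}) :=
  (Finset.univ.filter (fun f : Finset Y => f.card = 3)).image
    (fun f => Finset.univ.filter (fun e : {e : Finset Y // e.card = 2} => e.val ⊆ f))

/-- `M` freely contains exactly `m` complete `K_j`-graphs. -/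
def ExactlyKGraphs {S : Type} [DecidableEq S] (M : PSTS S) (j m : ℕ) : Prop :=
  ∃ f : Fin m → Finset S, Function.Injective f ∧
    (∀ i, (f i).card = j ∧ FreelyContains M (f i)) ∧
    (∀ X : Finset S, X.card = j → FreelyContains M X → ∃ i, X = f i)

section Stmt13Helpers
set_option linter.unusedSectionVars false

variable {S : Type} [Fintype S] [DecidableEq S] {M : PSTS S} {n : ℕ}

/-- Any line of `M` through two distinct vertices of a freely contained `X`
meets `X` in exactly two points. -/
private lemma line_card2 {X : Finset S} (hX : FreelyContains M X) {a b : S}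
    (ha : a ∈ X) (hb : b ∈ X) (hab : a ≠ b) {L : Finset S} (hL : L ∈ M.lines)
    (haL : a ∈ L) (hbL : b ∈ L) : (L ∩ X).card = 2 := by
  obtain ⟨L', hL', haL', hbL', hc⟩ := hX.1 a ha b hb hab
  rwa [M.unique L hL L' hL' a b hab haL hbL haL' hbL']

private lemma two_mul_choose_two (k : ℕ) : 2 * k.choose 2 + k = k * k := by
  induction k with
  | zero => simp
  | succ k ih =>
    rw [Nat.choose_succ_succ, Nat.choose_one_right]
    ring_nf
    ring_nf at ih
    omega

/-- Every line through a vertex of a freely contained `K_n` is a side. -/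
private lemma lines_through_vertex (hM : IsBinomial M (n + 1)) {X : Finset S}
    (hX : FreelyContains M X) (hXc : X.card = n) {a : S} (ha : a ∈ X)
    {L : Finset S} (hL : L ∈ M.lines) (haL : a ∈ L) : (L ∩ X).card = 2 := by
  classical
  set f : S → Finset S := fun b =>
    if h : ∃ L', L' ∈ M.lines ∧ a ∈ L' ∧ b ∈ L' ∧ (L' ∩ X).card = 2 then h.choose
    else ∅ with hf_def
  have hf : ∀ b ∈ X.erase a, f b ∈ M.lines ∧ a ∈ f b ∧ b ∈ f b ∧ (f b ∩ X).card = 2 := by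
    intro b hb
    rcases Finset.mem_erase.mp hb with ⟨hba, hbX⟩
    have h : ∃ L', L' ∈ M.lines ∧ a ∈ L' ∧ b ∈ L' ∧ (L' ∩ X).card = 2 := by
      obtain ⟨L', h1, h2, h3, h4⟩ := hX.1 a ha b hbX (Ne.symm hba)
      exact ⟨L', h1, h2, h3, h4⟩
    simp only [hf_def, dif_pos h]
    exact h.choose_spec
  have hinj : Set.InjOn f (X.erase a) := by
    intro b hb c hc hbc
    by_contra hne
    obtain ⟨h1, h2, h3, h4⟩ := hf b hb
    obtain ⟨h1', h2', h3', h4'⟩ := hf c hc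
    rcases Finset.mem_erase.mp hb with ⟨hba, hbX⟩
    rcases Finset.mem_erase.mp hc with ⟨hca, hcX⟩
    have hsub : ({a, b, c} : Finset S) ⊆ f b ∩ X := by
      intro x hx
      rcases Finset.mem_insert.mp hx with rfl | hx
      · exact Finset.mem_inter.mpr ⟨h2, ha⟩
      rcases Finset.mem_insert.mp hx with rfl | hx
      · exact Finset.mem_inter.mpr ⟨h3, hbX⟩
      · rcases Finset.mem_singleton.mp hx with rfl
        exact Finset.mem_inter.mpr ⟨hbc ▸ h3', hcX⟩
    have h3card : ({a, b, c} : Finset S).card = 3 :=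
      Finset.card_eq_three.mpr ⟨a, b, c, Ne.symm hba, Ne.symm hca, hne, rfl⟩
    have := Finset.card_le_card hsub
    omega
  have himg : (X.erase a).image f ⊆ M.lines.filter (fun L => a ∈ L) := by
    intro L' hL'
    obtain ⟨b, hb, rfl⟩ := Finset.mem_image.mp hL'
    obtain ⟨h1, h2, _, _⟩ := hf b hb
    exact Finset.mem_filter.mpr ⟨h1, h2⟩
  have hTcard : (M.lines.filter (fun L => a ∈ L)).card = n - 1 := by
    have := hM.2.2 a
    unfold pointRank at this
    omega
  have hicard : ((X.erase a).image f).card = n - 1 := by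
    rw [Finset.card_image_of_injOn hinj, Finset.card_erase_of_mem ha, hXc]
  have heq : (X.erase a).image f = M.lines.filter (fun L => a ∈ L) :=
    Finset.eq_of_subset_of_card_le himg (by omega)
  have hLmem : L ∈ (X.erase a).image f := by
    rw [heq]; exact Finset.mem_filter.mpr ⟨hL, haL⟩
  obtain ⟨b, hb, rfl⟩ := Finset.mem_image.mp hLmem
  exact (hf b hb).2.2.2

/-- Through every point outside a freely contained `K_n` there is a side. -/
private lemma exists_side_through (hM : IsBinomial M (n + 1)) {X : Finset S}
    (hX : FreelyContains M X) (hXc : X.card = n) {p : S} (hp : p ∉ X) :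
    ∃ L ∈ M.lines, p ∈ L ∧ (L ∩ X).card = 2 := by
  classical
  set Sides : Finset (Finset S) := M.lines.filter (fun L => (L ∩ X).card = 2)
    with hSides_def
  have hScard : Sides.card = n.choose 2 := by
    rw [← hXc, ← Finset.card_powersetCard 2 X]
    refine Finset.card_bij (fun L _ => L ∩ X) ?_ ?_ ?_
    · intro L hL
      rcases Finset.mem_filter.mp hL with ⟨_, h2⟩
      exact Finset.mem_powersetCard.mpr ⟨Finset.inter_subset_right, h2⟩
    · intro L1 hL1 L2 hL2 h
      rcases Finset.mem_filter.mp hL1 with ⟨hL1m, hc1⟩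
      rcases Finset.mem_filter.mp hL2 with ⟨hL2m, _⟩
      obtain ⟨x, y, hxy, hxyeq⟩ := Finset.card_eq_two.mp hc1
      have hx1 : x ∈ L1 ∩ X := hxyeq ▸ Finset.mem_insert_self x {y}
      have hy1 : y ∈ L1 ∩ X := hxyeq ▸ Finset.mem_insert_of_mem (Finset.mem_singleton_self y)
      have hx2 : x ∈ L2 ∩ X := h ▸ hx1
      have hy2 : y ∈ L2 ∩ X := h ▸ hy1
      exact M.unique L1 hL1m L2 hL2m x y hxy (Finset.mem_inter.mp hx1).1
        (Finset.mem_inter.mp hy1).1 (Finset.mem_inter.mp hx2).1 (Finset.mem_inter.mp hy2).1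
    · intro e he
      rcases Finset.mem_powersetCard.mp he with ⟨heX, he2⟩
      obtain ⟨x, y, hxy, rfl⟩ := Finset.card_eq_two.mp he2
      have hxX : x ∈ X := heX (Finset.mem_insert_self x {y})
      have hyX : y ∈ X := heX (Finset.mem_insert_of_mem (Finset.mem_singleton_self y))
      obtain ⟨L, h1, h2, h3, h4⟩ := hX.1 x hxX y hyX hxy
      refine ⟨L, Finset.mem_filter.mpr ⟨h1, h4⟩, ?_⟩
      have hsub : ({x, y} : Finset S) ⊆ L ∩ X := by
        intro z hz
        rcases Finset.mem_insert.mp hz with rfl | hz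
        · exact Finset.mem_inter.mpr ⟨h2, hxX⟩
        · rcases Finset.mem_singleton.mp hz with rfl
          exact Finset.mem_inter.mpr ⟨h3, hyX⟩
      have : ({x, y} : Finset S).card = 2 := Finset.card_eq_two.mpr ⟨x, y, hxy, rfl⟩
      exact (Finset.eq_of_subset_of_card_le hsub (by omega)).symm
  set t : Finset S → S := fun L => if h : (L \ X).Nonempty then h.choose else p with ht_def
  have ht : ∀ L ∈ Sides, t L ∈ L ∧ t L ∉ X := by
    intro L hL
    rcases Finset.mem_filter.mp hL with ⟨hLm, hc⟩
    have hL3 : L.card = 3 := M.card3 L hLm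
    have hcd : (L \ X).card = 1 := by
      have := Finset.card_inter_add_card_sdiff L X
      omega
    have hne : (L \ X).Nonempty := Finset.card_pos.mp (by omega)
    have hmem := hne.choose_spec
    simp only [ht_def, dif_pos hne]
    exact ⟨(Finset.mem_sdiff.mp hmem).1, (Finset.mem_sdiff.mp hmem).2⟩
  have hinj : Set.InjOn t Sides := by
    intro L1 hL1 L2 hL2 h12
    by_contra hne
    have h1 := ht L1 hL1
    have h2 := ht L2 hL2
    rcases Finset.mem_filter.mp hL1 with ⟨hL1m, hc1⟩
    rcases Finset.mem_filter.mp hL2 with ⟨hL2m, hc2⟩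
    exact h1.2 (hX.2 L1 L2 ⟨hL1m, hc1⟩ ⟨hL2m, hc2⟩ hne (t L1) h1.1 (h12 ▸ h2.1))
  have himg : Sides.image t ⊆ Finset.univ \ X := by
    intro q hq
    obtain ⟨L, hL, rfl⟩ := Finset.mem_image.mp hq
    exact Finset.mem_sdiff.mpr ⟨Finset.mem_univ _, (ht L hL).2⟩
  have hucard : (Finset.univ \ X).card = n.choose 2 := by
    rw [Finset.card_sdiff_of_subset (Finset.subset_univ X), hXc, Finset.card_univ, hM.1]
    have : (n + 1).choose 2 = n.choose 1 + n.choose 2 := Nat.choose_succ_succ n 1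
    rw [this, Nat.choose_one_right]
    omega
  have hicard : (Sides.image t).card = n.choose 2 := by
    rw [Finset.card_image_of_injOn hinj, hScard]
  have heq : Sides.image t = Finset.univ \ X :=
    Finset.eq_of_subset_of_card_le himg (by omega)
  have : p ∈ Sides.image t := by
    rw [heq]; exact Finset.mem_sdiff.mpr ⟨Finset.mem_univ _, hp⟩
  obtain ⟨L, hL, htL⟩ := Finset.mem_image.mp this
  rcases Finset.mem_filter.mp hL with ⟨hLm, hc⟩
  exact ⟨L, hLm, htL ▸ (ht L hL).1, hc⟩

/-- A point outside `X` lies on at most one line meeting `X`. -/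
private lemma unique_line_meeting (hM : IsBinomial M (n + 1)) {X : Finset S}
    (hX : FreelyContains M X) (hXc : X.card = n) {p : S} (hp : p ∉ X)
    {L1 L2 : Finset S} (h1 : L1 ∈ M.lines) (h2 : L2 ∈ M.lines)
    (hp1 : p ∈ L1) (hp2 : p ∈ L2) (hm1 : (L1 ∩ X).Nonempty)
    (hm2 : (L2 ∩ X).Nonempty) : L1 = L2 := by
  by_contra hne
  obtain ⟨a, ha⟩ := hm1
  obtain ⟨b, hb⟩ := hm2
  rcases Finset.mem_inter.mp ha with ⟨haL, haX⟩
  rcases Finset.mem_inter.mp hb with ⟨hbL, hbX⟩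
  have hs1 : (L1 ∩ X).card = 2 := lines_through_vertex hM hX hXc haX h1 haL
  have hs2 : (L2 ∩ X).card = 2 := lines_through_vertex hM hX hXc hbX h2 hbL
  exact hp (hX.2 L1 L2 ⟨h1, hs1⟩ ⟨h2, hs2⟩ hne p hp1 hp2)

end Stmt13Helpers

section Stmt13Family
set_option linter.unusedSectionVars false

variable {S : Type} [Fintype S] [DecidableEq S] {M : PSTS S} {n m : ℕ}
  {X : Fin m → Finset S}

private lemma n_ge_two (hM : IsBinomial M (n + 1)) (hinj : Function.Injective X)
    (hcard : ∀ i, (X i).card = n) {i j : Fin m} (hij : i ≠ j) : 2 ≤ n := by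
  by_contra h
  have hne : X i ≠ X j := fun he => hij (hinj he)
  interval_cases n
  · exact hne (by rw [Finset.card_eq_zero.mp (hcard i), Finset.card_eq_zero.mp (hcard j)])
  · obtain ⟨a, hai⟩ := Finset.card_eq_one.mp (hcard i)
    obtain ⟨b, hbj⟩ := Finset.card_eq_one.mp (hcard j)
    have hab : a ≠ b := by
      rintro rfl; exact hne (hai.trans hbj.symm)
    have hcS : Fintype.card S = 1 := by rw [hM.1]; rfl
    have : ({a, b} : Finset S).card = 2 := Finset.card_eq_two.mpr ⟨a, b, hab, rfl⟩
    have hle := Finset.card_le_card (Finset.subset_univ ({a, b} : Finset S))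
    rw [this, Finset.card_univ, hcS] at hle
    omega

private lemma pair_inter (hM : IsBinomial M (n + 1)) (hinj : Function.Injective X)
    (hcard : ∀ i, (X i).card = n) (hfree : ∀ i, FreelyContains M (X i))
    {i j : Fin m} (hij : i ≠ j) : (X i ∩ X j).card = 1 := by
  have hne : X i ≠ X j := fun he => hij (hinj he)
  have hbne : (X j \ X i).Nonempty := by
    rw [Finset.sdiff_nonempty]
    intro hsub
    exact hne ((Finset.eq_of_subset_of_card_le hsub
      (by rw [hcard i, hcard j])).symm)
  obtain ⟨b, hb⟩ := hbne
  rcases Finset.mem_sdiff.mp hb with ⟨hbj, hbi⟩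
  -- nonempty intersection
  obtain ⟨L, hLm, hbL, hLi⟩ := exists_side_through hM (hfree i) (hcard i) hbi
  have hLj : (L ∩ X j).card = 2 :=
    lines_through_vertex hM (hfree j) (hcard j) hbj hLm hbL
  have hL3 : L.card = 3 := M.card3 L hLm
  have hun : ((L ∩ X i) ∪ (L ∩ X j)).card ≤ 3 := by
    refine le_trans (Finset.card_le_card ?_) (le_of_eq hL3)
    intro x hx
    rcases Finset.mem_union.mp hx with hx | hx
    · exact (Finset.mem_inter.mp hx).1
    · exact (Finset.mem_inter.mp hx).1
  have hci := Finset.card_union_add_card_inter (L ∩ X i) (L ∩ X j)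
  have hint : 1 ≤ ((L ∩ X i) ∩ (L ∩ X j)).card := by omega
  obtain ⟨p, hp⟩ := Finset.card_pos.mp (show 0 < ((L ∩ X i) ∩ (L ∩ X j)).card by omega)
  rcases Finset.mem_inter.mp hp with ⟨hp1, hp2⟩
  have hpmem : p ∈ X i ∩ X j :=
    Finset.mem_inter.mpr ⟨(Finset.mem_inter.mp hp1).2, (Finset.mem_inter.mp hp2).2⟩
  -- at most one
  have hle : (X i ∩ X j).card ≤ 1 := by
    by_contra h
    obtain ⟨a, ha, hap⟩ := Finset.exists_mem_ne (show 1 < (X i ∩ X j).card by omega) p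
    rcases Finset.mem_inter.mp ha with ⟨hai, haj⟩
    rcases Finset.mem_inter.mp hpmem with ⟨hpi, hpj⟩
    have hba : b ≠ a := fun he => hbi (he ▸ hai)
    have hbp : b ≠ p := fun he => hbi (he ▸ hpi)
    obtain ⟨La, hLam, hbLa, haLa, hcLa⟩ := (hfree j).1 b hbj a haj hba
    obtain ⟨Lp, hLpm, hbLp, hpLp, hcLp⟩ := (hfree j).1 b hbj p hpj hbp
    have hLane : La ≠ Lp := by
      rintro rfl
      have hsub : ({a, p, b} : Finset S) ⊆ La ∩ X j := by
        intro x hx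
        rcases Finset.mem_insert.mp hx with rfl | hx
        · exact Finset.mem_inter.mpr ⟨haLa, haj⟩
        rcases Finset.mem_insert.mp hx with rfl | hx
        · exact Finset.mem_inter.mpr ⟨hpLp, hpj⟩
        · rcases Finset.mem_singleton.mp hx with rfl
          exact Finset.mem_inter.mpr ⟨hbLa, hbj⟩
      have h3 : ({a, p, b} : Finset S).card = 3 :=
        Finset.card_eq_three.mpr ⟨a, p, b, hap, fun h => hba h.symm, fun h => hbp h.symm, rfl⟩
      have := Finset.card_le_card hsub
      omega
    exact hLane (unique_line_meeting hM (hfree i) (hcard i) hbi hLam hLpm hbLa hbLp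
      ⟨a, Finset.mem_inter.mpr ⟨haLa, hai⟩⟩ ⟨p, Finset.mem_inter.mpr ⟨hpLp, hpi⟩⟩)
  have : 1 ≤ (X i ∩ X j).card := Finset.card_pos.mpr ⟨p, hpmem⟩
  omega

private lemma triple_inter (hM : IsBinomial M (n + 1)) (hinj : Function.Injective X)
    (hcard : ∀ i, (X i).card = n) (hfree : ∀ i, FreelyContains M (X i))
    {i j k : Fin m} (hij : i ≠ j) (hik : i ≠ k) (hjk : j ≠ k)
    {p : S} (hpi : p ∈ X i) (hpj : p ∈ X j) (hpk : p ∈ X k) : False := by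
  have hn2 : 2 ≤ n := n_ge_two hM hinj hcard hij
  have hsingle : ∀ {i' j' : Fin m}, i' ≠ j' → ∀ {x y : S},
      x ∈ X i' → x ∈ X j' → y ∈ X i' → y ∈ X j' → x = y := by
    intro i' j' hne x y hx1 hx2 hy1 hy2
    by_contra hxy
    have hsub : ({x, y} : Finset S) ⊆ X i' ∩ X j' := by
      intro z hz
      rcases Finset.mem_insert.mp hz with rfl | hz
      · exact Finset.mem_inter.mpr ⟨hx1, hx2⟩
      · rcases Finset.mem_singleton.mp hz with rfl
        exact Finset.mem_inter.mpr ⟨hy1, hy2⟩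
    have h2 : ({x, y} : Finset S).card = 2 := Finset.card_eq_two.mpr ⟨x, y, hxy, rfl⟩
    have := Finset.card_le_card hsub
    rw [h2, pair_inter hM hinj hcard hfree hne] at this
    omega
  obtain ⟨q, hqk, hqp⟩ := Finset.exists_mem_ne
    (by rw [hcard k]; omega) p
  obtain ⟨L, hLm, hpL, hqL, hcLk⟩ := (hfree k).1 p hpk q hqk (Ne.symm hqp)
  have hci : (L ∩ X i).card = 2 := lines_through_vertex hM (hfree i) (hcard i) hpi hLm hpL
  have hcj : (L ∩ X j).card = 2 := lines_through_vertex hM (hfree j) (hcard j) hpj hLm hpL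
  obtain ⟨a, hamem, hap⟩ := Finset.exists_mem_ne (by omega : 1 < (L ∩ X i).card) p
  obtain ⟨b, hbmem, hbp⟩ := Finset.exists_mem_ne (by omega : 1 < (L ∩ X j).card) p
  rcases Finset.mem_inter.mp hamem with ⟨haL, hai⟩
  rcases Finset.mem_inter.mp hbmem with ⟨hbL, hbj⟩
  have hab : a ≠ b := by
    rintro rfl
    exact hap (hsingle hij hai hbj hpi hpj)
  have hL3 : L.card = 3 := M.card3 L hLm
  have hLeq : L = {p, a, b} := by
    have hsub : ({p, a, b} : Finset S) ⊆ L := by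
      intro x hx
      rcases Finset.mem_insert.mp hx with rfl | hx
      · exact hpL
      rcases Finset.mem_insert.mp hx with rfl | hx
      · exact haL
      · rcases Finset.mem_singleton.mp hx with rfl; exact hbL
    have h3 : ({p, a, b} : Finset S).card = 3 :=
      Finset.card_eq_three.mpr ⟨p, a, b, Ne.symm hap, Ne.symm hbp, hab, rfl⟩
    exact (Finset.eq_of_subset_of_card_le hsub (by omega)).symm
  have hq : q ∈ ({p, a, b} : Finset S) := hLeq ▸ hqL
  rcases Finset.mem_insert.mp hq with rfl | hq
  · exact hqp rfl
  rcases Finset.mem_insert.mp hq with rfl | hq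
  · exact hqp (hsingle hik hai hqk hpi hpk)
  · rcases Finset.mem_singleton.mp hq with rfl
    exact hqp (hsingle hjk hbj hqk hpj hpk)

end Stmt13Family

/-- structure of m distinct freely contained K_n-graphs in a
binomial B(n+1)-configuration: the private vertex sets Z_i have n+1-m points,
the set Z of points on no graph has C(n+1-m,2) points, lines that are sides of
no G_i lie in Z, lines meeting Z twice avoid all the X_i, there are C(n+1-m,3)
lines inside Z, and (Z, lines within Z) is a regularly contained
B(n+1-m)-configuration. -/
theorem stmt_13 (n m : ℕ) (S : Type) [Fintype S] [DecidableEq S] (M : PSTS S)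
    (hM : IsBinomial M (n + 1)) (X : Fin m → Finset S)
    (hinj : Function.Injective X) (hcard : ∀ i, (X i).card = n)
    (hfree : ∀ i, FreelyContains M (X i))
    (Zi : Fin m → Finset S)
    (hZi : ∀ i, Zi i = (X i).filter (fun p => ∀ k, k ≠ i → p ∉ X k))
    (Z : Finset S) (hZ : Z = Finset.univ.filter (fun p => ∀ i, p ∉ X i)) :
    (∀ i, (Zi i).card = n + 1 - m) ∧
    Z.card = Nat.choose (n + 1 - m) 2 ∧
    (∀ L ∈ M.lines, (∀ i, ¬ IsSide M (X i) L) → L ⊆ Z) ∧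
    (∀ L ∈ M.lines, 2 ≤ (L ∩ Z).card → ∀ i, ∀ p ∈ L, p ∉ X i) ∧
    (M.lines.filter (fun L => L ⊆ Z)).card = Nat.choose (n + 1 - m) 3 ∧
    RegularBinomialSub M Z (M.lines.filter (fun L => L ⊆ Z)) (n + 1 - m) := by
  classical
  have hsingle : ∀ {i j : Fin m}, i ≠ j → ∀ {x y : S},
      x ∈ X i → x ∈ X j → y ∈ X i → y ∈ X j → x = y := by
    intro i j hne x y hx1 hx2 hy1 hy2
    by_contra hxy
    have hsub : ({x, y} : Finset S) ⊆ X i ∩ X j := by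
      intro z hz
      rcases Finset.mem_insert.mp hz with rfl | hz
      · exact Finset.mem_inter.mpr ⟨hx1, hx2⟩
      · rcases Finset.mem_singleton.mp hz with rfl
        exact Finset.mem_inter.mpr ⟨hy1, hy2⟩
    have h2 : ({x, y} : Finset S).card = 2 := Finset.card_eq_two.mpr ⟨x, y, hxy, rfl⟩
    have := Finset.card_le_card hsub
    rw [h2, pair_inter hM hinj hcard hfree hne] at this
    omega
  -- Part 1 : cardinality of the private parts
  have h1 : ∀ i : Fin m, (Zi i).card = n + 1 - m ∧ m - 1 ≤ n := by
    intro i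
    have hm0 : 0 < m := i.pos
    have hex : ∀ p ∈ (X i).filter (fun p => ¬ (∀ k, k ≠ i → p ∉ X k)),
        ∃ k, k ≠ i ∧ p ∈ X k := by
      intro p hp
      have := (Finset.mem_filter.mp hp).2
      push_neg at this
      exact this
    have hWcard : ((X i).filter (fun p => ¬ (∀ k, k ≠ i → p ∉ X k))).card = m - 1 := by
      have hbij : ((X i).filter (fun p => ¬ (∀ k, k ≠ i → p ∉ X k))).card
          = ((Finset.univ : Finset (Fin m)).erase i).card := by
        refine Finset.card_bij (fun p hp => (hex p hp).choose) ?_ ?_ ?_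
        · intro p hp
          exact Finset.mem_erase.mpr ⟨(hex p hp).choose_spec.1, Finset.mem_univ _⟩
        · intro p hp q hq heq
          have s1 := (hex p hp).choose_spec
          have s2 := (hex q hq).choose_spec
          rw [← heq] at s2
          exact hsingle (Ne.symm s1.1) (Finset.mem_filter.mp hp).1 s1.2
            (Finset.mem_filter.mp hq).1 s2.2
        · intro k hk
          have hki : k ≠ i := (Finset.mem_erase.mp hk).1
          have hpos : 0 < (X i ∩ X k).card := by
            rw [pair_inter hM hinj hcard hfree (Ne.symm hki)]; omega
          obtain ⟨p, hp⟩ := Finset.card_pos.mp hpos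
          rcases Finset.mem_inter.mp hp with ⟨hpi, hpk⟩
          have hpmem : p ∈ (X i).filter (fun p => ¬ (∀ k, k ≠ i → p ∉ X k)) :=
            Finset.mem_filter.mpr ⟨hpi, fun hall => hall k hki hpk⟩
          refine ⟨p, hpmem, ?_⟩
          have s1 := (hex p hpmem).choose_spec
          by_contra hne
          exact triple_inter hM hinj hcard hfree (Ne.symm s1.1) (Ne.symm hki) hne
            hpi s1.2 hpk
      rw [hbij, Finset.card_erase_of_mem (Finset.mem_univ i), Finset.card_univ,
        Fintype.card_fin]
    have hsplit := Finset.card_filter_add_card_filter_not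
      (s := X i) (p := fun p => ∀ k, k ≠ i → p ∉ X k)
    have hle := Finset.card_filter_le (X i) (fun p => ¬ (∀ k, k ≠ i → p ∉ X k))
    rw [hWcard] at hsplit
    rw [hZi i]
    constructor
    · have := hcard i
      omega
    · rw [hWcard] at hle
      have := hcard i
      omega
  have hm_le : m ≤ n + 1 := by
    rcases Nat.eq_zero_or_pos m with rfl | hm
    · omega
    · have := (h1 ⟨0, hm⟩).2
      omega
  -- degree function
  set deg : S → ℕ := fun p => ((Finset.univ : Finset (Fin m)).filter (fun i => p ∈ X i)).card
    with hdeg_def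
  have hdeg2 : ∀ p, deg p ≤ 2 := by
    intro p
    by_contra h
    push_neg at h
    obtain ⟨i, j, k, hi, hj, hk, hij, hik, hjk⟩ := Finset.two_lt_card_iff.mp h
    exact triple_inter hM hinj hcard hfree hij hik hjk
      (Finset.mem_filter.mp hi).2 (Finset.mem_filter.mp hj).2 (Finset.mem_filter.mp hk).2
  have hZfilter : Z = Finset.univ.filter (fun p => deg p = 0) := by
    rw [hZ]
    ext p
    simp [hdeg_def, Finset.card_eq_zero, Finset.filter_eq_empty_iff]
  have hsumdeg : ∑ p : S, deg p = m * n := by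
    calc ∑ p : S, deg p
        = ∑ p : S, ∑ i : Fin m, (if p ∈ X i then 1 else 0) := by
          refine Finset.sum_congr rfl fun p _ => ?_
          exact Finset.card_filter _ _
      _ = ∑ i : Fin m, ∑ p : S, (if p ∈ X i then 1 else 0) := Finset.sum_comm
      _ = ∑ i : Fin m, (X i).card := by
          refine Finset.sum_congr rfl fun i _ => ?_
          rw [← Finset.card_filter]
          congr 1
          ext p
          simp
      _ = m * n := by
          simp only [hcard]
          rw [Finset.sum_const, Finset.card_univ, Fintype.card_fin, smul_eq_mul]
  have hD2 : (Finset.univ.filter (fun p : S => deg p = 2)).card = m.choose 2 := by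
    rw [show m.choose 2 = ((Finset.univ : Finset (Fin m)).powersetCard 2).card by
      rw [Finset.card_powersetCard, Finset.card_univ, Fintype.card_fin]]
    refine Finset.card_bij
      (fun p _ => (Finset.univ : Finset (Fin m)).filter (fun i => p ∈ X i)) ?_ ?_ ?_
    · intro p hp
      exact Finset.mem_powersetCard.mpr ⟨Finset.subset_univ _, (Finset.mem_filter.mp hp).2⟩
    · intro p hp q hq heq
      have h2 : ((Finset.univ : Finset (Fin m)).filter (fun i => p ∈ X i)).card = 2 :=
        (Finset.mem_filter.mp hp).2
      obtain ⟨i, j, hij, hs⟩ := Finset.card_eq_two.mp h2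
      have hi : i ∈ (Finset.univ : Finset (Fin m)).filter (fun i => p ∈ X i) := by
        rw [hs]; exact Finset.mem_insert_self i {j}
      have hj : j ∈ (Finset.univ : Finset (Fin m)).filter (fun i => p ∈ X i) := by
        rw [hs]; exact Finset.mem_insert_of_mem (Finset.mem_singleton_self j)
      have hi' := hi; have hj' := hj
      rw [heq] at hi' hj'
      exact hsingle hij (Finset.mem_filter.mp hi).2 (Finset.mem_filter.mp hj).2
        (Finset.mem_filter.mp hi').2 (Finset.mem_filter.mp hj').2
    · intro s hs
      rcases Finset.mem_powersetCard.mp hs with ⟨_, hs2⟩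
      obtain ⟨i, j, hij, rfl⟩ := Finset.card_eq_two.mp hs2
      have hpos : 0 < (X i ∩ X j).card := by
        rw [pair_inter hM hinj hcard hfree hij]; omega
      obtain ⟨p, hp⟩ := Finset.card_pos.mp hpos
      rcases Finset.mem_inter.mp hp with ⟨hpi, hpj⟩
      have hsub : ({i, j} : Finset (Fin m)) ⊆
          (Finset.univ : Finset (Fin m)).filter (fun k => p ∈ X k) := by
        intro k hk
        rcases Finset.mem_insert.mp hk with rfl | hk
        · exact Finset.mem_filter.mpr ⟨Finset.mem_univ _, hpi⟩
        · rcases Finset.mem_singleton.mp hk with rfl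
          exact Finset.mem_filter.mpr ⟨Finset.mem_univ _, hpj⟩
      have hfeq : (Finset.univ : Finset (Fin m)).filter (fun k => p ∈ X k)
          = ({i, j} : Finset (Fin m)) := by
        refine (Finset.eq_of_subset_of_card_le hsub ?_).symm
        rw [hs2]
        exact hdeg2 p
      have hdp : deg p = 2 := by simp only [hdeg_def]; rw [hfeq, hs2]
      exact ⟨p, Finset.mem_filter.mpr ⟨Finset.mem_univ _, hdp⟩, hfeq⟩
  -- two counting identities
  have hA : m * n + 2 * Z.card
      + (Finset.univ.filter (fun p : S => deg p = 1)).card = 2 * Fintype.card S := by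
    have key : ∀ p : S, deg p + 2 * (if deg p = 0 then 1 else 0)
        + (if deg p = 1 then 1 else 0) = 2 := by
      intro p
      have h := hdeg2 p
      set e := deg p with he
      interval_cases e <;> simp
    have hsum : ∑ p : S, (deg p + 2 * (if deg p = 0 then 1 else 0)
        + (if deg p = 1 then 1 else 0)) = 2 * Fintype.card S := by
      rw [Finset.sum_congr rfl (fun p _ => key p), Finset.sum_const, Finset.card_univ,
        smul_eq_mul, mul_comm]
    rw [Finset.sum_add_distrib, Finset.sum_add_distrib, hsumdeg, ← Finset.mul_sum,
      ← Finset.card_filter, ← Finset.card_filter] at hsum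
    rw [hZfilter]
    omega
  have hB : Z.card + (Finset.univ.filter (fun p : S => deg p = 1)).card
      + (Finset.univ.filter (fun p : S => deg p = 2)).card = Fintype.card S := by
    have key : ∀ p : S, ((if deg p = 0 then 1 else 0) + (if deg p = 1 then 1 else 0)
        + (if deg p = 2 then 1 else 0) : ℕ) = 1 := by
      intro p
      have h := hdeg2 p
      set e := deg p with he
      interval_cases e <;> simp
    have hsum : ∑ p : S, ((if deg p = 0 then 1 else 0) + (if deg p = 1 then 1 else 0)
        + (if deg p = 2 then 1 else 0) : ℕ) = Fintype.card S := by
      rw [Finset.sum_congr rfl (fun p _ => key p), Finset.sum_const, Finset.card_univ,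
        smul_eq_mul, mul_one]
    rw [Finset.sum_add_distrib, Finset.sum_add_distrib, ← Finset.card_filter,
      ← Finset.card_filter, ← Finset.card_filter] at hsum
    rw [hZfilter]
    omega
  have hkey : Z.card + m * n = Fintype.card S + m.choose 2 := by omega
  -- Part 2 : cardinality of Z
  have hZcard : Z.card = (n + 1 - m).choose 2 := by
    have hS : Fintype.card S = (n + 1).choose 2 := hM.1
    have e1 : (Z.card : ℤ) + (m : ℤ) * n = (Fintype.card S : ℤ) + (m.choose 2 : ℤ) := by
      exact_mod_cast hkey
    have hSz : (Fintype.card S : ℤ) = ((n + 1).choose 2 : ℤ) := by exact_mod_cast hS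
    have c1 : 2 * (((n + 1).choose 2 : ℕ) : ℤ) + ((n : ℤ) + 1)
        = ((n : ℤ) + 1) * ((n : ℤ) + 1) := by exact_mod_cast two_mul_choose_two (n + 1)
    have c2 : 2 * ((m.choose 2 : ℕ) : ℤ) + (m : ℤ) = (m : ℤ) * m := by
      exact_mod_cast two_mul_choose_two m
    have c3 : 2 * (((n + 1 - m).choose 2 : ℕ) : ℤ) + ((n + 1 - m : ℕ) : ℤ)
        = ((n + 1 - m : ℕ) : ℤ) * ((n + 1 - m : ℕ) : ℤ) := by
      exact_mod_cast two_mul_choose_two (n + 1 - m)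
    have hdz : ((n + 1 - m : ℕ) : ℤ) = (n : ℤ) + 1 - m := by
      omega
    rw [hdz] at c3
    have hgoal : (2 : ℤ) * Z.card = 2 * ((n + 1 - m).choose 2 : ℕ) := by
      linear_combination 2 * e1 + 2 * hSz + c1 + c2 - c3
    have : 2 * Z.card = 2 * (n + 1 - m).choose 2 := by exact_mod_cast hgoal
    omega
  -- Part 3
  have h3 : ∀ L ∈ M.lines, (∀ i, ¬ IsSide M (X i) L) → L ⊆ Z := by
    intro L hL hns q hq
    rw [hZ]
    refine Finset.mem_filter.mpr ⟨Finset.mem_univ _, fun i hqXi => ?_⟩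
    exact hns i ⟨hL, lines_through_vertex hM (hfree i) (hcard i) hqXi hL hq⟩
  -- Part 4
  have h4 : ∀ L ∈ M.lines, 2 ≤ (L ∩ Z).card → ∀ i, ∀ p ∈ L, p ∉ X i := by
    intro L hL h2 i p hpL hpXi
    have hside : (L ∩ X i).card = 2 :=
      lines_through_vertex hM (hfree i) (hcard i) hpXi hL hpL
    have hdisj : Disjoint (L ∩ Z) (L ∩ X i) := by
      rw [Finset.disjoint_left]
      intro q hq hq'
      have hqZ : q ∈ Z := (Finset.mem_inter.mp hq).2
      rw [hZ] at hqZ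
      exact (Finset.mem_filter.mp hqZ).2 i (Finset.mem_inter.mp hq').2
    have hL3 : L.card = 3 := M.card3 L hL
    have hsub : (L ∩ Z) ∪ (L ∩ X i) ⊆ L := by
      intro x hx
      rcases Finset.mem_union.mp hx with hx | hx
      · exact (Finset.mem_inter.mp hx).1
      · exact (Finset.mem_inter.mp hx).1
    have := Finset.card_le_card hsub
    rw [Finset.card_union_of_disjoint hdisj] at this
    omega
  -- Part 5 : per-point count of lines inside Z
  have h5p : ∀ p ∈ Z,
      ((M.lines.filter (fun L => L ⊆ Z)).filter (fun L => p ∈ L)).card = n - 1 - m := by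
    intro p hp
    have hpZ : ∀ i, p ∉ X i := by
      rw [hZ] at hp
      exact (Finset.mem_filter.mp hp).2
    have hTall : (M.lines.filter (fun L => p ∈ L)).card = n - 1 := by
      have := hM.2.2 p
      unfold pointRank at this
      omega
    set Tall := M.lines.filter (fun L => p ∈ L) with hTall_def
    set Tmeet := Tall.filter (fun L => ∃ i, (L ∩ X i).Nonempty) with hTmeet_def
    have exmap : ∀ L ∈ Tmeet, ∃ i, (L ∩ X i).Nonempty :=
      fun L hL => (Finset.mem_filter.mp hL).2
    have hmemTall : ∀ L ∈ Tmeet, L ∈ M.lines ∧ p ∈ L := by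
      intro L hL
      exact Finset.mem_filter.mp (Finset.mem_filter.mp hL).1
    have hTmeet : Tmeet.card = m := by
      rw [← Fintype.card_fin m, ← Finset.card_univ]
      refine Finset.card_bij (fun L hL => (exmap L hL).choose)
        (fun _ _ => Finset.mem_univ _) ?_ ?_
      · intro L1 hL1 L2 hL2 heq
        have s1 := (exmap L1 hL1).choose_spec
        have s2 := (exmap L2 hL2).choose_spec
        rw [← heq] at s2
        obtain ⟨hL1m, hpL1⟩ := hmemTall L1 hL1
        obtain ⟨hL2m, hpL2⟩ := hmemTall L2 hL2
        exact unique_line_meeting hM (hfree _) (hcard _) (hpZ _)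
          hL1m hL2m hpL1 hpL2 s1 s2
      · intro i _
        obtain ⟨L, hLm, hpL, hci⟩ := exists_side_through hM (hfree i) (hcard i) (hpZ i)
        have hLT : L ∈ Tmeet := by
          refine Finset.mem_filter.mpr ⟨Finset.mem_filter.mpr ⟨hLm, hpL⟩, ⟨i, ?_⟩⟩
          exact Finset.card_pos.mp (by omega)
        refine ⟨L, hLT, ?_⟩
        have s1 := (exmap L hLT).choose_spec
        set j := (exmap L hLT).choose with hj_def
        by_contra hji
        obtain ⟨a, ha⟩ := s1
        rcases Finset.mem_inter.mp ha with ⟨haL, haj⟩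
        have hcj : (L ∩ X j).card = 2 :=
          lines_through_vertex hM (hfree j) (hcard j) haj hLm haL
        have hL3 : L.card = 3 := M.card3 L hLm
        have hsubU : (L ∩ X i) ∪ (L ∩ X j) ⊆ L.erase p := by
          intro x hx
          rcases Finset.mem_union.mp hx with hx | hx
          · rcases Finset.mem_inter.mp hx with ⟨hxL, hxi⟩
            exact Finset.mem_erase.mpr ⟨fun he => hpZ i (he ▸ hxi), hxL⟩
          · rcases Finset.mem_inter.mp hx with ⟨hxL, hxj⟩
            exact Finset.mem_erase.mpr ⟨fun he => hpZ j (he ▸ hxj), hxL⟩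
        have hEcard : (L.erase p).card = 2 := by
          rw [Finset.card_erase_of_mem hpL, hL3]
        have hIsub : (L ∩ X i) ∩ (L ∩ X j) ⊆ X i ∩ X j := by
          intro x hx
          rcases Finset.mem_inter.mp hx with ⟨hx1, hx2⟩
          exact Finset.mem_inter.mpr ⟨(Finset.mem_inter.mp hx1).2, (Finset.mem_inter.mp hx2).2⟩
        have hIcard : ((L ∩ X i) ∩ (L ∩ X j)).card ≤ 1 := by
          have := Finset.card_le_card hIsub
          rw [pair_inter hM hinj hcard hfree (fun h => hji h.symm)] at this
          exact this
        have hU := Finset.card_le_card hsubU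
        have := Finset.card_union_add_card_inter (L ∩ X i) (L ∩ X j)
        omega
    have heqG : (M.lines.filter (fun L => L ⊆ Z)).filter (fun L => p ∈ L)
        = Tall \ Tmeet := by
      ext L
      constructor
      · intro hLmem
        rcases Finset.mem_filter.mp hLmem with ⟨hLG, hpL⟩
        rcases Finset.mem_filter.mp hLG with ⟨hLm, hLZ⟩
        refine Finset.mem_sdiff.mpr ⟨Finset.mem_filter.mpr ⟨hLm, hpL⟩, fun hLT => ?_⟩
        obtain ⟨i, q, hq⟩ := (Finset.mem_filter.mp hLT).2
        rcases Finset.mem_inter.mp hq with ⟨hqL, hqi⟩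
        have hqZ : q ∈ Z := hLZ hqL
        rw [hZ] at hqZ
        exact (Finset.mem_filter.mp hqZ).2 i hqi
      · intro hLmem
        rcases Finset.mem_sdiff.mp hLmem with ⟨hLTall, hLnT⟩
        rcases Finset.mem_filter.mp hLTall with ⟨hLm, hpL⟩
        refine Finset.mem_filter.mpr ⟨Finset.mem_filter.mpr ⟨hLm, fun q hq => ?_⟩, hpL⟩
        rw [hZ]
        refine Finset.mem_filter.mpr ⟨Finset.mem_univ _, fun i hqi => ?_⟩
        exact hLnT (Finset.mem_filter.mpr ⟨hLTall,
          ⟨i, ⟨q, Finset.mem_inter.mpr ⟨hq, hqi⟩⟩⟩⟩)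
    rw [heqG, Finset.card_sdiff_of_subset (Finset.filter_subset _ _), hTall, hTmeet]
  -- Part 5 : number of lines inside Z
  have hGcard : (M.lines.filter (fun L => L ⊆ Z)).card = (n + 1 - m).choose 3 := by
    set G := M.lines.filter (fun L => L ⊆ Z) with hG_def
    have hdouble : 3 * G.card = Z.card * (n - 1 - m) := by
      calc 3 * G.card = ∑ _L ∈ G, 3 := by
            rw [Finset.sum_const, smul_eq_mul, mul_comm]
        _ = ∑ L ∈ G, ∑ p ∈ Z, (if p ∈ L then 1 else 0) := by
            refine Finset.sum_congr rfl fun L hL => ?_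
            rcases Finset.mem_filter.mp hL with ⟨hLm, hLZ⟩
            rw [← Finset.card_filter]
            have : Z.filter (fun p => p ∈ L) = L := by
              ext q
              simp only [Finset.mem_filter]
              exact ⟨fun h => h.2, fun h => ⟨hLZ h, h⟩⟩
            rw [this, M.card3 L hLm]
        _ = ∑ p ∈ Z, ∑ L ∈ G, (if p ∈ L then 1 else 0) := Finset.sum_comm
        _ = ∑ p ∈ Z, (n - 1 - m) := by
            refine Finset.sum_congr rfl fun p hp => ?_
            rw [← Finset.card_filter]
            exact h5p p hp
        _ = Z.card * (n - 1 - m) := by rw [Finset.sum_const, smul_eq_mul]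
    have hc : (n + 1 - m).choose 3 * 3 = (n + 1 - m).choose 2 * ((n + 1 - m) - 2) :=
      Nat.choose_succ_right_eq (n + 1 - m) 2
    rw [hZcard] at hdouble
    have hd2 : n - 1 - m = (n + 1 - m) - 2 := by omega
    rw [hd2] at hdouble
    omega
  refine ⟨fun i => (h1 i).1, hZcard, h3, h4, hGcard, ?_⟩
  refine ⟨Finset.filter_subset _ _, fun L hL => (Finset.mem_filter.mp hL).2, ?_, hZcard,
    hGcard, ?_⟩
  · intro L hL h2
    refine Finset.mem_filter.mpr ⟨hL, fun q hq => ?_⟩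
    rw [hZ]
    exact Finset.mem_filter.mpr ⟨Finset.mem_univ _, fun i => h4 L hL h2 i q hq⟩
  · intro p hp
    rw [h5p p hp]
    omega
end

section
/- With the notation of the structure theorem (m distinct K_n-graphs freely contained in a B(n+1)-configuration M, Z_i the private vertices of G_i, q^{i,j} the common vertex of G_i and G_j): for each pair i ≠ j, the sets Z_i ∪ {q^{i,j}} and Z_j ∪ {q^{i,j}} are two K_{n-m+2}-graphs freely contained in M which share all their sides through q^{i,j}; moreover every line of M that is a side of G_i but of no other G_k meets X_i in two points of Z_i and meets Z in exactly one point, and through every point of Z = S ∖ ⋃ X_i there passes exactly one side of G_i not shared with any other G_k. -/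
open Finset

section Stmt14Aux

open Finset

variable {S : Type} [DecidableEq S]

lemma aux_three_in_two {A : Finset S} {a b c : S} (h : A.card ≤ 2)
    (ha : a ∈ A) (hb : b ∈ A) (hc : c ∈ A) (hab : a ≠ b) (hac : a ≠ c) : b = c := by
  by_contra hbc
  have hs : ({a, b, c} : Finset S) ⊆ A := by
    intro x hx
    simp only [mem_insert, mem_singleton] at hx
    rcases hx with rfl | rfl | rfl <;> assumption
  have h3 : ({a, b, c} : Finset S).card = 3 := by
    rw [Finset.card_insert_of_notMem (by simp [hab, hac]),
      Finset.card_insert_of_notMem (by simp [hbc]), Finset.card_singleton]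
  have := Finset.card_le_card hs
  omega

lemma aux_inter_le_two (M : PSTS S) {X L : Finset S} (hX : FreelyContains M X)
    (hL : L ∈ M.lines) : (L ∩ X).card ≤ 2 := by
  by_contra h
  push_neg at h
  obtain ⟨a, ha, b, hb, hab⟩ := Finset.one_lt_card.mp (by omega : 1 < (L ∩ X).card)
  obtain ⟨L', hL', haL', hbL', hc⟩ := hX.1 a (Finset.mem_of_mem_inter_right ha)
    b (Finset.mem_of_mem_inter_right hb) hab
  have hE : L = L' := M.unique L hL L' hL' a b hab (Finset.mem_of_mem_inter_left ha)
    (Finset.mem_of_mem_inter_left hb) haL' hbL'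
  rw [hE] at h
  omega

lemma aux_factA {n : ℕ} [Fintype S] (M : PSTS S) (hM : IsBinomial M (n + 1))
    {X : Finset S} (hXc : X.card = n) (hX : FreelyContains M X) {p : S} (hp : p ∈ X)
    {L : Finset S} (hL : L ∈ M.lines) (hpL : p ∈ L) : (L ∩ X).card = 2 := by
  classical
  set F := M.lines.filter (fun L => p ∈ L) with hF
  have hFc : F.card = n - 1 := by
    have h := hM.2.2 p
    unfold pointRank at h
    rw [← hF] at h
    omega
  set T := F.filter (fun L => (L ∩ X).card = 2) with hT
  have hex : ∀ a ∈ X.erase p, ∃ L', L' ∈ M.lines ∧ p ∈ L' ∧ a ∈ L' ∧ (L' ∩ X).card = 2 := by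
    intro a ha
    obtain ⟨L', hL', h1, h2, h3⟩ := hX.1 p hp a (Finset.mem_erase.mp ha).2
      (Ne.symm (Finset.mem_erase.mp ha).1)
    exact ⟨L', hL', h1, h2, h3⟩
  set g : S → Finset S := fun a =>
    if h : ∃ L', L' ∈ M.lines ∧ p ∈ L' ∧ a ∈ L' ∧ (L' ∩ X).card = 2 then h.choose else ∅
    with hg
  have hgspec : ∀ a ∈ X.erase p, g a ∈ M.lines ∧ p ∈ g a ∧ a ∈ g a ∧ (g a ∩ X).card = 2 := by
    intro a ha
    have h := hex a ha
    simp only [hg, dif_pos h]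
    exact h.choose_spec
  have hle : (X.erase p).card ≤ T.card := by
    apply Finset.card_le_card_of_injOn g
    · intro a ha
      obtain ⟨h1, h2, h3, h4⟩ := hgspec a ha
      exact Finset.mem_filter.mpr ⟨Finset.mem_filter.mpr ⟨h1, h2⟩, h4⟩
    · intro a ha b hb hab2
      obtain ⟨h1, h2, h3, h4⟩ := hgspec a (Finset.mem_coe.mp ha)
      obtain ⟨h1', h2', h3', h4'⟩ := hgspec b (Finset.mem_coe.mp hb)
      have hpa : a ≠ p := (Finset.mem_erase.mp (Finset.mem_coe.mp ha)).1
      have hpb : b ≠ p := (Finset.mem_erase.mp (Finset.mem_coe.mp hb)).1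
      have hmA : a ∈ g a ∩ X :=
        Finset.mem_inter.mpr ⟨h3, (Finset.mem_erase.mp (Finset.mem_coe.mp ha)).2⟩
      have hmB : b ∈ g a ∩ X :=
        Finset.mem_inter.mpr ⟨hab2 ▸ h3', (Finset.mem_erase.mp (Finset.mem_coe.mp hb)).2⟩
      have hmP : p ∈ g a ∩ X := Finset.mem_inter.mpr ⟨h2, hp⟩
      exact aux_three_in_two (by omega) hmP hmA hmB (Ne.symm hpa) (Ne.symm hpb)
  have hTF : T = F := by
    have hcc : F.card ≤ T.card := by
      rw [Finset.card_erase_of_mem hp, hXc] at hle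
      omega
    exact Finset.eq_of_subset_of_card_le (Finset.filter_subset _ _) hcc
  have hLT : L ∈ T := by
    rw [hTF]
    exact Finset.mem_filter.mpr ⟨hL, hpL⟩
  exact (Finset.mem_filter.mp hLT).2

lemma aux_NT {n m : ℕ} [Fintype S] (M : PSTS S) (hM : IsBinomial M (n + 1))
    {X : Fin m → Finset S} (hinj : Function.Injective X)
    (hcard : ∀ i, (X i).card = n) (hfree : ∀ i, FreelyContains M (X i))
    {q : Fin m → Fin m → S} (hq : ∀ i j, i ≠ j → X i ∩ X j = {q i j})
    {i j k : Fin m} (hij : i ≠ j) (hjk : j ≠ k) (hik : i ≠ k)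
    {p : S} (hpi : p ∈ X i) (hpj : p ∈ X j) (hpk : p ∈ X k) : False := by
  have hn2 : 2 ≤ n := by
    by_contra h
    push_neg at h
    have h1 : ∀ t : Fin m, p ∈ X t → X t = {p} := by
      intro t hpt
      apply Finset.eq_singleton_iff_unique_mem.mpr
      exact ⟨hpt, fun x hx => Finset.card_le_one.mp (by rw [hcard]; omega) x hx p hpt⟩
    exact hij (hinj ((h1 i hpi).trans (h1 j hpj).symm))
  have hpos : 0 < (M.lines.filter (fun L => p ∈ L)).card := by
    have h := hM.2.2 p
    unfold pointRank at h
    omega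
  obtain ⟨L, hLmem⟩ := Finset.card_pos.mp hpos
  have hL : L ∈ M.lines := (Finset.mem_filter.mp hLmem).1
  have hpL : p ∈ L := (Finset.mem_filter.mp hLmem).2
  have hL3 : L.card = 3 := M.card3 L hL
  have key : ∀ a b : Fin m, a ≠ b → p ∈ X a → p ∈ X b →
      ∀ u, u ∈ L ∩ X a → u ≠ p → ∀ v, v ∈ L ∩ X b → v ≠ p → u ≠ v := by
    intro a b hab hpa hpb u hu hup v hv hvp huv
    have h1 : u ∈ X a ∩ X b :=
      Finset.mem_inter.mpr ⟨(Finset.mem_inter.mp hu).2, huv ▸ (Finset.mem_inter.mp hv).2⟩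
    have h2 : p ∈ X a ∩ X b := Finset.mem_inter.mpr ⟨hpa, hpb⟩
    rw [hq a b hab, Finset.mem_singleton] at h1 h2
    exact hup (h1.trans h2.symm)
  have hxi := aux_factA M hM (hcard i) (hfree i) hpi hL hpL
  have hxj := aux_factA M hM (hcard j) (hfree j) hpj hL hpL
  have hxk := aux_factA M hM (hcard k) (hfree k) hpk hL hpL
  obtain ⟨x, hx, hxp⟩ := Finset.exists_mem_ne (by omega : 1 < (L ∩ X i).card) p
  obtain ⟨y, hy, hyp⟩ := Finset.exists_mem_ne (by omega : 1 < (L ∩ X j).card) p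
  obtain ⟨z, hz, hzp⟩ := Finset.exists_mem_ne (by omega : 1 < (L ∩ X k).card) p
  have hxy : x ≠ y := key i j hij hpi hpj x hx hxp y hy hyp
  have hxz : x ≠ z := key i k hik hpi hpk x hx hxp z hz hzp
  have hyz : y ≠ z := key j k hjk hpj hpk y hy hyp z hz hzp
  have hcard2 : (L.erase p).card ≤ 2 := by
    rw [Finset.card_erase_of_mem hpL, hL3]
  exact hyz (aux_three_in_two hcard2
    (Finset.mem_erase.mpr ⟨hxp, (Finset.mem_inter.mp hx).1⟩)
    (Finset.mem_erase.mpr ⟨hyp, (Finset.mem_inter.mp hy).1⟩)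
    (Finset.mem_erase.mpr ⟨hzp, (Finset.mem_inter.mp hz).1⟩) hxy hxz)

end Stmt14Aux

/-- with m distinct freely contained K_n-graphs: for i ≠ j the
sets Z_i ∪ {q^{i,j}} and Z_j ∪ {q^{i,j}} are freely contained K_{n-m+2}-graphs
sharing their sides through q^{i,j}; each side of G_i which is a side of no
other G_k meets X_i in two points of Z_i and meets Z in exactly one point; and
through each point of Z passes exactly one such side of G_i. -/
theorem stmt_14 (n m : ℕ) (S : Type) [Fintype S] [DecidableEq S] (M : PSTS S)
    (hM : IsBinomial M (n + 1)) (X : Fin m → Finset S)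
    (hinj : Function.Injective X) (hcard : ∀ i, (X i).card = n)
    (hfree : ∀ i, FreelyContains M (X i))
    (q : Fin m → Fin m → S)
    (hq : ∀ i j, i ≠ j → X i ∩ X j = {q i j})
    (Zi : Fin m → Finset S)
    (hZi : ∀ i, Zi i = (X i).filter (fun p => ∀ k, k ≠ i → p ∉ X k))
    (Z : Finset S) (hZ : Z = Finset.univ.filter (fun p => ∀ i, p ∉ X i)) :
    (∀ i j, i ≠ j →
      (Zi i ∪ {q i j}).card = n + 2 - m ∧ (Zi j ∪ {q i j}).card = n + 2 - m ∧
      FreelyContains M (Zi i ∪ {q i j}) ∧ FreelyContains M (Zi j ∪ {q i j}) ∧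
      (∀ L : Finset S, q i j ∈ L →
        (IsSide M (Zi i ∪ {q i j}) L ↔ IsSide M (Zi j ∪ {q i j}) L))) ∧
    (∀ i, ∀ L : Finset S, IsSide M (X i) L →
      (∀ k, k ≠ i → ¬ IsSide M (X k) L) →
      L ∩ X i ⊆ Zi i ∧ (L ∩ Zi i).card = 2 ∧ (L ∩ Z).card = 1) ∧
    (∀ i, ∀ p ∈ Z, ∃! L : Finset S,
      IsSide M (X i) L ∧ (∀ k, k ≠ i → ¬ IsSide M (X k) L) ∧ p ∈ L) := by
  classical
  have hq2 : ∀ i j : Fin m, i ≠ j → q i j ∈ X i ∧ q i j ∈ X j := by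
    intro i j hij
    have h : q i j ∈ X i ∩ X j := by
      rw [hq i j hij]; exact Finset.mem_singleton_self _
    exact ⟨(Finset.mem_inter.mp h).1, (Finset.mem_inter.mp h).2⟩
  have hqsymm : ∀ i j : Fin m, i ≠ j → q i j = q j i := by
    intro i j hij
    have h := hq2 j i hij.symm
    have h2 : q j i ∈ X i ∩ X j := Finset.mem_inter.mpr ⟨h.2, h.1⟩
    rw [hq i j hij, Finset.mem_singleton] at h2
    exact h2.symm
  have hmemZi : ∀ (i : Fin m) (p : S), p ∈ Zi i ↔ p ∈ X i ∧ ∀ k, k ≠ i → p ∉ X k := by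
    intro i p
    rw [hZi i, Finset.mem_filter]
  have hZsub : ∀ i : Fin m, Zi i ⊆ X i := fun i p hp => ((hmemZi i p).mp hp).1
  have hNT : ∀ i j k : Fin m, i ≠ j → j ≠ k → i ≠ k →
      ∀ p : S, p ∈ X i → p ∈ X j → p ∈ X k → False :=
    fun i j k hij hjk hik p hpi hpj hpk =>
      aux_NT M hM hinj hcard hfree hq hij hjk hik hpi hpj hpk
  have hA : ∀ (i : Fin m) (p : S), p ∈ X i → ∀ L ∈ M.lines, p ∈ L → (L ∩ X i).card = 2 :=
    fun i p hp L hL hpL => aux_factA M hM (hcard i) (hfree i) hp hL hpL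
  have hXsub' : ∀ i j : Fin m, i ≠ j → Zi i ∪ {q i j} ⊆ X i := by
    intro i j hij p hp
    rcases Finset.mem_union.mp hp with h | h
    · exact hZsub i h
    · rw [Finset.mem_singleton] at h; exact h ▸ (hq2 i j hij).1
  have hqnot : ∀ i j : Fin m, i ≠ j → q i j ∉ Zi i := by
    intro i j hij h
    exact ((hmemZi i (q i j)).mp h).2 j hij.symm (hq2 i j hij).2
  have hcardZi : ∀ i : Fin m, m - 1 ≤ n ∧ (Zi i).card = n - (m - 1) := by
    intro i
    set Q := (Finset.univ.erase i).image (q i) with hQdef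
    have hQsub : Q ⊆ X i := by
      intro p hp
      obtain ⟨k, hk, rfl⟩ := Finset.mem_image.mp hp
      exact (hq2 i k (Ne.symm (Finset.mem_erase.mp hk).1)).1
    have hQcard : Q.card = m - 1 := by
      rw [hQdef, Finset.card_image_of_injOn, Finset.card_erase_of_mem (Finset.mem_univ i),
        Finset.card_univ, Fintype.card_fin]
      intro a ha b hb hab
      by_contra hne
      have hia : a ≠ i := (Finset.mem_erase.mp (Finset.mem_coe.mp ha)).1
      have hib : b ≠ i := (Finset.mem_erase.mp (Finset.mem_coe.mp hb)).1
      exact hNT a b i hne hib hia (q i a) (hq2 i a (Ne.symm hia)).2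
        (hab ▸ (hq2 i b (Ne.symm hib)).2) (hq2 i a (Ne.symm hia)).1
    have hZQ : Zi i = X i \ Q := by
      ext p
      rw [hmemZi, Finset.mem_sdiff]
      constructor
      · rintro ⟨hpX, hall⟩
        refine ⟨hpX, fun hpQ => ?_⟩
        obtain ⟨k, hk, hpk⟩ := Finset.mem_image.mp hpQ
        have hki : k ≠ i := (Finset.mem_erase.mp hk).1
        exact hall k hki (hpk ▸ (hq2 i k (Ne.symm hki)).2)
      · rintro ⟨hpX, hnQ⟩
        refine ⟨hpX, fun k hki hpk => hnQ ?_⟩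
        have h2 : p ∈ X i ∩ X k := Finset.mem_inter.mpr ⟨hpX, hpk⟩
        rw [hq i k (Ne.symm hki), Finset.mem_singleton] at h2
        exact Finset.mem_image.mpr ⟨k, Finset.mem_erase.mpr ⟨hki, Finset.mem_univ k⟩, h2.symm⟩
    have hm1 : m - 1 ≤ n := by
      have := Finset.card_le_card hQsub
      rw [hQcard, hcard i] at this
      exact this
    refine ⟨hm1, ?_⟩
    rw [hZQ, Finset.card_sdiff_of_subset hQsub, hQcard, hcard i]
  have hcardX' : ∀ i j : Fin m, i ≠ j → (Zi i ∪ {q i j}).card = n + 2 - m := by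
    intro i j hij
    have h1 : Zi i ∪ {q i j} = insert (q i j) (Zi i) := by
      rw [Finset.union_comm, Finset.insert_eq]
    rw [h1, Finset.card_insert_of_notMem (hqnot i j hij), (hcardZi i).2]
    have h2 := (hcardZi i).1
    have h3 : 0 < m := i.pos
    omega
  have hfc : ∀ i j : Fin m, i ≠ j → FreelyContains M (Zi i ∪ {q i j}) := by
    intro i j hij
    have hXs := hXsub' i j hij
    constructor
    · intro a ha b hb hab
      obtain ⟨L, hL, h1, h2, h3⟩ := (hfree i).1 a (hXs ha) b (hXs hb) hab
      refine ⟨L, hL, h1, h2, ?_⟩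
      have hub : (L ∩ (Zi i ∪ {q i j})).card ≤ 2 := by
        calc (L ∩ (Zi i ∪ {q i j})).card ≤ (L ∩ X i).card :=
              Finset.card_le_card (Finset.inter_subset_inter_left hXs)
          _ = 2 := h3
      have hlb : 2 ≤ (L ∩ (Zi i ∪ {q i j})).card := by
        have hpair : ({a, b} : Finset S) ⊆ L ∩ (Zi i ∪ {q i j}) := by
          intro x hx
          rcases Finset.mem_insert.mp hx with rfl | hx
          · exact Finset.mem_inter.mpr ⟨h1, ha⟩
          · rw [Finset.mem_singleton] at hx
            exact hx ▸ Finset.mem_inter.mpr ⟨h2, hb⟩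
        calc 2 = ({a, b} : Finset S).card := (Finset.card_pair hab).symm
          _ ≤ _ := Finset.card_le_card hpair
      omega
    · intro L₁ L₂ hs1 hs2 hne p hp1 hp2
      have hside : ∀ L₀ : Finset S, IsSide M (Zi i ∪ {q i j}) L₀ → IsSide M (X i) L₀ := by
        rintro L₀ ⟨hL₀, hc₀⟩
        refine ⟨hL₀, ?_⟩
        have hub := aux_inter_le_two M (hfree i) hL₀
        have hlb : 2 ≤ (L₀ ∩ X i).card := by
          calc 2 = (L₀ ∩ (Zi i ∪ {q i j})).card := hc₀.symm
            _ ≤ (L₀ ∩ X i).card :=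
              Finset.card_le_card (Finset.inter_subset_inter_left hXs)
        omega
      have hpX : p ∈ X i := (hfree i).2 L₁ L₂ (hside L₁ hs1) (hside L₂ hs2) hne p hp1 hp2
      by_contra hpX'
      have hpq : p ≠ q i j := fun h =>
        hpX' (Finset.mem_union_right _ (h ▸ Finset.mem_singleton_self _))
      have hpz : p ∉ Zi i := fun h => hpX' (Finset.mem_union_left _ h)
      obtain ⟨k, hki, hpk⟩ : ∃ k, k ≠ i ∧ p ∈ X k := by
        by_contra hcon
        push_neg at hcon
        exact hpz ((hmemZi i p).mpr ⟨hpX, hcon⟩)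
      have hkj : k ≠ j := by
        rintro rfl
        have h2 : p ∈ X i ∩ X k := Finset.mem_inter.mpr ⟨hpX, hpk⟩
        rw [hq i k hij, Finset.mem_singleton] at h2
        exact hpq h2
      have hcs1 := hs1.2
      have h2k := hA k p hpk L₁ hs1.1 hp1
      obtain ⟨w, hw, hwp⟩ :=
        Finset.exists_mem_ne (by omega : 1 < (L₁ ∩ X k).card) p
      obtain ⟨z₁, hz₁, z₂, hz₂, hzz⟩ :=
        Finset.one_lt_card.mp (by omega : 1 < (L₁ ∩ (Zi i ∪ {q i j})).card)
      have hL₁3 : L₁.card = 3 := M.card3 L₁ hs1.1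
      have hz₁p : z₁ ≠ p := fun h => hpX' (h ▸ (Finset.mem_inter.mp hz₁).2)
      have hz₂p : z₂ ≠ p := fun h => hpX' (h ▸ (Finset.mem_inter.mp hz₂).2)
      have hwz : w = z₁ ∨ w = z₂ := by
        by_contra hcon
        push_neg at hcon
        have hc2 : (L₁.erase p).card ≤ 2 := by
          rw [Finset.card_erase_of_mem hp1, hL₁3]
        exact hzz (aux_three_in_two hc2
          (Finset.mem_erase.mpr ⟨hwp, (Finset.mem_inter.mp hw).1⟩)
          (Finset.mem_erase.mpr ⟨hz₁p, (Finset.mem_inter.mp hz₁).1⟩)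
          (Finset.mem_erase.mpr ⟨hz₂p, (Finset.mem_inter.mp hz₂).1⟩) hcon.1 hcon.2)
      have hwX' : w ∈ Zi i ∪ {q i j} := by
        rcases hwz with rfl | rfl
        · exact (Finset.mem_inter.mp hz₁).2
        · exact (Finset.mem_inter.mp hz₂).2
      have hwk : w ∈ X k := (Finset.mem_inter.mp hw).2
      rcases Finset.mem_union.mp hwX' with h | h
      · exact ((hmemZi i w).mp h).2 k hki hwk
      · rw [Finset.mem_singleton] at h
        exact hNT i j k hij (Ne.symm hkj) (Ne.symm hki) (q i j)
          (hq2 i j hij).1 (hq2 i j hij).2 (h ▸ hwk)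
  have htrans : ∀ i j : Fin m, i ≠ j → ∀ L ∈ M.lines, q i j ∈ L →
      (L ∩ (Zi i ∪ {q i j})).card = 2 → (L ∩ (Zi j ∪ {q i j})).card = 2 := by
    intro i j hij L hL hqL hc
    have hL3 : L.card = 3 := M.card3 L hL
    have hqX' : q i j ∈ L ∩ (Zi i ∪ {q i j}) :=
      Finset.mem_inter.mpr ⟨hqL, Finset.mem_union_right _ (Finset.mem_singleton_self _)⟩
    obtain ⟨z, hz, hzq⟩ :=
      Finset.exists_mem_ne (by omega : 1 < (L ∩ (Zi i ∪ {q i j})).card) (q i j)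
    have hzZ : z ∈ Zi i := by
      rcases Finset.mem_union.mp (Finset.mem_inter.mp hz).2 with h | h
      · exact h
      · exact absurd (Finset.mem_singleton.mp h) hzq
    have h2j := hA j (q i j) (hq2 i j hij).2 L hL hqL
    obtain ⟨w, hw, hwq⟩ :=
      Finset.exists_mem_ne (by omega : 1 < (L ∩ X j).card) (q i j)
    have hwzne : w ≠ z := by
      intro h
      exact ((hmemZi i z).mp hzZ).2 j hij.symm (h ▸ (Finset.mem_inter.mp hw).2)
    have hwZj : w ∈ Zi j := by
      rw [hmemZi]
      refine ⟨(Finset.mem_inter.mp hw).2, fun k hkj hwk => ?_⟩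
      have hki : k ≠ i := by
        rintro rfl
        have h2 : w ∈ X k ∩ X j := Finset.mem_inter.mpr ⟨hwk, (Finset.mem_inter.mp hw).2⟩
        rw [hq k j hij, Finset.mem_singleton] at h2
        exact hwq h2
      have h2k := hA k w hwk L hL (Finset.mem_inter.mp hw).1
      obtain ⟨u, hu, huw⟩ :=
        Finset.exists_mem_ne (by omega : 1 < (L ∩ X k).card) w
      have huqz : u = q i j ∨ u = z := by
        by_contra hcon
        push_neg at hcon
        have hc2 : (L.erase w).card ≤ 2 := by
          rw [Finset.card_erase_of_mem (Finset.mem_inter.mp hw).1, hL3]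
        exact (Ne.symm hzq) (aux_three_in_two hc2
          (Finset.mem_erase.mpr ⟨huw, (Finset.mem_inter.mp hu).1⟩)
          (Finset.mem_erase.mpr ⟨Ne.symm hwq, hqL⟩)
          (Finset.mem_erase.mpr ⟨Ne.symm hwzne, (Finset.mem_inter.mp hz).1⟩)
          hcon.1 hcon.2)
      rcases huqz with rfl | rfl
      · exact hNT i j k hij (Ne.symm hkj) (Ne.symm hki) (q i j)
          (hq2 i j hij).1 (hq2 i j hij).2 (Finset.mem_inter.mp hu).2
      · exact ((hmemZi i u).mp hzZ).2 k hki (Finset.mem_inter.mp hu).2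
    have hsubj : Zi j ∪ {q i j} ⊆ X j := by
      intro x hx
      rcases Finset.mem_union.mp hx with h | h
      · exact hZsub j h
      · rw [Finset.mem_singleton] at h; exact h ▸ (hq2 i j hij).2
    have hub : (L ∩ (Zi j ∪ {q i j})).card ≤ 2 := by
      calc (L ∩ (Zi j ∪ {q i j})).card ≤ (L ∩ X j).card :=
            Finset.card_le_card (Finset.inter_subset_inter_left hsubj)
        _ = 2 := h2j
    have hlb : 2 ≤ (L ∩ (Zi j ∪ {q i j})).card := by
      have hpair : ({q i j, w} : Finset S) ⊆ L ∩ (Zi j ∪ {q i j}) := by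
        intro x hx
        rcases Finset.mem_insert.mp hx with rfl | hx
        · exact Finset.mem_inter.mpr
            ⟨hqL, Finset.mem_union_right _ (Finset.mem_singleton_self _)⟩
        · rw [Finset.mem_singleton] at hx
          exact hx ▸ Finset.mem_inter.mpr
            ⟨(Finset.mem_inter.mp hw).1, Finset.mem_union_left _ hwZj⟩
      calc 2 = ({q i j, w} : Finset S).card := (Finset.card_pair (Ne.symm hwq)).symm
        _ ≤ _ := Finset.card_le_card hpair
    omega
  refine ⟨?_, ?_, ?_⟩
  · intro i j hij
    have hqs := hqsymm i j hij
    refine ⟨hcardX' i j hij, ?_, hfc i j hij, ?_, ?_⟩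
    · rw [hqs]; exact hcardX' j i hij.symm
    · rw [hqs]; exact hfc j i hij.symm
    · intro L hqL
      constructor
      · rintro ⟨hL, hc⟩
        exact ⟨hL, htrans i j hij L hL hqL hc⟩
      · rintro ⟨hL, hc⟩
        refine ⟨hL, ?_⟩
        rw [hqs] at hqL hc ⊢
        exact htrans j i hij.symm L hL hqL hc
  · intro i L hside hnot
    obtain ⟨hL, hc⟩ := hside
    have hL3 := M.card3 L hL
    have hsub : L ∩ X i ⊆ Zi i := by
      intro x hx
      rw [hmemZi]
      refine ⟨(Finset.mem_inter.mp hx).2, fun k hk hxk => ?_⟩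
      exact hnot k hk ⟨hL, hA k x hxk L hL (Finset.mem_inter.mp hx).1⟩
    have hcz : (L ∩ Zi i).card = 2 := by
      have heq : L ∩ X i = L ∩ Zi i :=
        Finset.Subset.antisymm
          (fun x hx => Finset.mem_inter.mpr ⟨(Finset.mem_inter.mp hx).1, hsub hx⟩)
          (Finset.inter_subset_inter_left (hZsub i))
      rw [← heq]; exact hc
    refine ⟨hsub, hcz, ?_⟩
    have hdiff : (L \ X i).card = 1 := by
      have h4 := Finset.card_inter_add_card_sdiff L (X i)
      omega
    obtain ⟨c, hcL⟩ := Finset.card_eq_one.mp hdiff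
    have hcmem : c ∈ L \ X i := hcL ▸ Finset.mem_singleton_self c
    have hcZ : c ∈ Z := by
      rw [hZ, Finset.mem_filter]
      refine ⟨Finset.mem_univ c, fun k hck => ?_⟩
      by_cases hk : k = i
      · exact (Finset.mem_sdiff.mp hcmem).2 (hk ▸ hck)
      · exact hnot k hk ⟨hL, hA k c hck L hL (Finset.mem_sdiff.mp hcmem).1⟩
    have heq1 : L ∩ Z = {c} := by
      apply Finset.Subset.antisymm
      · intro x hx
        rw [← hcL, Finset.mem_sdiff]
        have hxZ := (Finset.mem_inter.mp hx).2
        rw [hZ, Finset.mem_filter] at hxZ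
        exact ⟨(Finset.mem_inter.mp hx).1, hxZ.2 i⟩
      · intro x hx
        rw [Finset.mem_singleton] at hx
        exact hx ▸ Finset.mem_inter.mpr ⟨(Finset.mem_sdiff.mp hcmem).1, hcZ⟩
    rw [heq1, Finset.card_singleton]
  · intro i p hpZ
    rw [hZ, Finset.mem_filter] at hpZ
    have hpnX := hpZ.2
    set sides := M.lines.filter (fun L => (L ∩ X i).card = 2) with hsides
    have huniq : ∀ L₁ ∈ sides, ∀ L₂ ∈ sides, ∀ x : S, x ∉ X i → x ∈ L₁ → x ∈ L₂ → L₁ = L₂ := by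
      intro L₁ h1 L₂ h2 x hx hx1 hx2
      by_contra hne
      exact hx ((hfree i).2 L₁ L₂
        ⟨(Finset.mem_filter.mp h1).1, (Finset.mem_filter.mp h1).2⟩
        ⟨(Finset.mem_filter.mp h2).1, (Finset.mem_filter.mp h2).2⟩ hne x hx1 hx2)
    have hscard : sides.card = Nat.choose n 2 := by
      rw [← hcard i, ← Finset.card_powersetCard 2 (X i)]
      apply Finset.card_bij (fun L _ => L ∩ X i)
      · intro L hLs
        rw [Finset.mem_powersetCard]
        exact ⟨Finset.inter_subset_right, (Finset.mem_filter.mp hLs).2⟩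
      · intro L₁ h1 L₂ h2 heq
        obtain ⟨a, ha, b, hb, hab⟩ := Finset.one_lt_card.mp
          (by rw [(Finset.mem_filter.mp h1).2]; exact one_lt_two : 1 < (L₁ ∩ X i).card)
        exact M.unique L₁ (Finset.mem_filter.mp h1).1 L₂ (Finset.mem_filter.mp h2).1 a b hab
          (Finset.mem_inter.mp ha).1 (Finset.mem_inter.mp hb).1
          (Finset.mem_inter.mp (heq ▸ ha)).1 (Finset.mem_inter.mp (heq ▸ hb)).1
      · intro e he
        rw [Finset.mem_powersetCard] at he
        obtain ⟨a, b, hab, rfl⟩ := Finset.card_eq_two.mp he.2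
        obtain ⟨L, hL, h1, h2, h3⟩ := (hfree i).1 a (he.1 (by simp)) b (he.1 (by simp)) hab
        refine ⟨L, Finset.mem_filter.mpr ⟨hL, h3⟩, ?_⟩
        refine (Finset.eq_of_subset_of_card_le ?_ ?_).symm
        · intro x hx
          rcases Finset.mem_insert.mp hx with rfl | hx
          · exact Finset.mem_inter.mpr ⟨h1, he.1 (by simp)⟩
          · rw [Finset.mem_singleton] at hx
            exact hx ▸ Finset.mem_inter.mpr ⟨h2, he.1 (by simp)⟩
        · rw [h3, Finset.card_pair hab]
    have hout : ∀ L ∈ sides, ∃ c, L \ X i = {c} := by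
      intro L hLs
      have h1 := (Finset.mem_filter.mp hLs).2
      have h2 := M.card3 L (Finset.mem_filter.mp hLs).1
      have h4 := Finset.card_inter_add_card_sdiff L (X i)
      exact Finset.card_eq_one.mp (by omega)
    set out : Finset S → S := fun L => if h : ∃ c, L \ X i = {c} then h.choose else p
      with houtdef
    have houtspec : ∀ L ∈ sides, L \ X i = {out L} := by
      intro L hLs
      have h := hout L hLs
      simp only [houtdef, dif_pos h]
      exact h.choose_spec
    have houtmem : ∀ L ∈ sides, out L ∈ L ∧ out L ∉ X i := by
      intro L hLs
      have h : out L ∈ L \ X i := (houtspec L hLs) ▸ Finset.mem_singleton_self _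
      exact ⟨(Finset.mem_sdiff.mp h).1, (Finset.mem_sdiff.mp h).2⟩
    have himg : Finset.image out sides = Finset.univ \ X i := by
      apply Finset.eq_of_subset_of_card_le
      · intro x hx
        obtain ⟨L, hLs, rfl⟩ := Finset.mem_image.mp hx
        exact Finset.mem_sdiff.mpr ⟨Finset.mem_univ _, (houtmem L hLs).2⟩
      · have hinjon : Set.InjOn out ↑sides := by
          intro L₁ h1 L₂ h2 heq
          exact huniq L₁ (Finset.mem_coe.mp h1) L₂ (Finset.mem_coe.mp h2) (out L₁)
            (houtmem L₁ (Finset.mem_coe.mp h1)).2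
            (houtmem L₁ (Finset.mem_coe.mp h1)).1
            (heq ▸ (houtmem L₂ (Finset.mem_coe.mp h2)).1)
        rw [Finset.card_image_of_injOn hinjon, hscard,
          Finset.card_sdiff_of_subset (Finset.subset_univ _), Finset.card_univ, hcard i]
        have h5 : Nat.choose (n + 1) 2 = n + Nat.choose n 2 := by
          rw [Nat.choose_succ_succ, Nat.choose_one_right]
        have h6 := hM.1
        omega
    have hpmem : p ∈ Finset.image out sides :=
      himg ▸ Finset.mem_sdiff.mpr ⟨Finset.mem_univ p, hpnX i⟩
    obtain ⟨L, hLs, houtp⟩ := Finset.mem_image.mp hpmem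
    have hLl : L ∈ M.lines := (Finset.mem_filter.mp hLs).1
    have hLc : (L ∩ X i).card = 2 := (Finset.mem_filter.mp hLs).2
    have hpL : p ∈ L := houtp ▸ (houtmem L hLs).1
    refine ⟨L, ⟨⟨hLl, hLc⟩, ?_, hpL⟩, ?_⟩
    · intro k hk hsk
      obtain ⟨hLk, hck⟩ := hsk
      have hLe : L ∩ X k ⊆ L.erase p := by
        intro x hx
        exact Finset.mem_erase.mpr
          ⟨fun h => hpnX k (h ▸ (Finset.mem_inter.mp hx).2), (Finset.mem_inter.mp hx).1⟩
      have hLie : L ∩ X i ⊆ L.erase p := by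
        intro x hx
        exact Finset.mem_erase.mpr
          ⟨fun h => hpnX i (h ▸ (Finset.mem_inter.mp hx).2), (Finset.mem_inter.mp hx).1⟩
      have hcerase : (L.erase p).card ≤ 2 := by
        rw [Finset.card_erase_of_mem hpL, M.card3 L hLl]
      have he1 : L ∩ X k = L.erase p :=
        Finset.eq_of_subset_of_card_le hLe (by omega)
      have he2 : L ∩ X i = L.erase p :=
        Finset.eq_of_subset_of_card_le hLie (by omega)
      have heq : L ∩ X k = L ∩ X i := he1.trans he2.symm
      have hle1 : L ∩ X k ⊆ {q i k} := by
        intro x hx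
        rw [← hq i k (Ne.symm hk)]
        exact Finset.mem_inter.mpr
          ⟨(Finset.mem_inter.mp (heq ▸ hx)).2, (Finset.mem_inter.mp hx).2⟩
      have h7 := Finset.card_le_card hle1
      rw [hck, Finset.card_singleton] at h7
      omega
    · rintro L' ⟨⟨hL', hc'⟩, _, hpL'⟩
      exact huniq L' (Finset.mem_filter.mpr ⟨hL', hc'⟩) L hLs p (hpnX i) hpL' hpL
end

section
/- Given a B(n)-configuration N = (Z,G) that does not freely contain any K_{n-1}-graph, an n-element set X disjoint from Z, and a bijection μ from the 2-subsets of X to Z, the structure K_X +_μ N — with point set X ∪ Z and lines G together with all triples {a, b, μ({a,b})} for 2-subsets {a,b} of X — is a B(n+1)-configuration that freely contains exactly one K_n-graph, namely K_X. -/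
open Finset

lemma freely_empty {S : Type} [DecidableEq S] (M : PSTS S) : FreelyContains M ∅ := by
  constructor
  · intro a ha; simp at ha
  · intro L₁ L₂ h₁ _ _ _ _ _
    have := h₁.2; simp at this

lemma freely_inter_le_two {S : Type} [DecidableEq S] (M : PSTS S) (Y : Finset S)
    (h : FreelyContains M Y) (L : Finset S) (hL : L ∈ M.lines) : (L ∩ Y).card ≤ 2 := by
  by_contra hc
  push_neg at hc
  obtain ⟨a, b, ha, hb, hab⟩ := (Finset.one_lt_card_iff (s := L ∩ Y)).mp (by omega)
  obtain ⟨haL, haY⟩ := Finset.mem_inter.mp ha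
  obtain ⟨hbL, hbY⟩ := Finset.mem_inter.mp hb
  obtain ⟨L', hL', haL', hbL', hcard⟩ := h.1 a haY b hbY hab
  have : L = L' := M.unique L hL L' hL' a b hab haL hbL haL' hbL'
  rw [this] at hc
  omega


lemma freely_erase {S : Type} [DecidableEq S] (M : PSTS S) (Y : Finset S)
    (h : FreelyContains M Y) (y : S) : FreelyContains M (Y.erase y) := by
  have hinter : ∀ L : Finset S, L ∩ Y.erase y = (L ∩ Y).erase y := by
    intro L; ext p; simp [Finset.mem_erase, Finset.mem_inter]; tauto
  constructor
  · intro a ha b hb hab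
    obtain ⟨hay, haY⟩ := Finset.mem_erase.mp ha
    obtain ⟨hby, hbY⟩ := Finset.mem_erase.mp hb
    obtain ⟨L, hL, haL, hbL, hcard⟩ := h.1 a haY b hbY hab
    refine ⟨L, hL, haL, hbL, ?_⟩
    have hsub : ({a, b} : Finset S) ⊆ L ∩ Y := by
      intro p hp
      rcases Finset.mem_insert.mp hp with rfl | hp
      · exact Finset.mem_inter.mpr ⟨haL, haY⟩
      · rw [Finset.mem_singleton] at hp; subst hp
        exact Finset.mem_inter.mpr ⟨hbL, hbY⟩
    have hcard2 : ({a, b} : Finset S).card = 2 := by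
      rw [Finset.card_insert_of_notMem (by simpa using hab), Finset.card_singleton]
    have heq : ({a, b} : Finset S) = L ∩ Y :=
      Finset.eq_of_subset_of_card_le hsub (by omega)
    rw [hinter, ← heq]
    rw [Finset.erase_eq_of_notMem (by simp [Ne.symm hay, Ne.symm hby])]
    exact hcard2
  · intro L₁ L₂ h₁ h₂ hne p hp₁ hp₂
    have key : ∀ L : Finset S, IsSide M (Y.erase y) L → IsSide M Y L ∧ (y ∈ Y → y ∉ L) := by
      intro L hL
      have hle := freely_inter_le_two M Y h L hL.1
      have h2 : (L ∩ Y.erase y).card = 2 := hL.2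
      rw [hinter] at h2
      have hyn : y ∈ Y → y ∉ L := by
        intro hyY hy
        have : y ∈ L ∩ Y := Finset.mem_inter.mpr ⟨hy, hyY⟩
        have := Finset.card_erase_of_mem this
        omega
      refine ⟨⟨hL.1, ?_⟩, hyn⟩
      rwa [Finset.erase_eq_of_notMem (fun hc => by
        obtain ⟨h1, h2⟩ := Finset.mem_inter.mp hc
        exact hyn h2 h1)] at h2
    obtain ⟨hs₁, hy₁⟩ := key L₁ h₁
    obtain ⟨hs₂, _⟩ := key L₂ h₂
    have hpY := h.2 L₁ L₂ hs₁ hs₂ hne p hp₁ hp₂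
    refine Finset.mem_erase.mpr ⟨?_, hpY⟩
    intro hc; subst hc
    exact hy₁ hpY hp₁
/-- Given a B(n)-configuration N freely containing no
K_{n-1}-graph, an n-element set X disjoint from its points, and a labelling μ
(a bijection from the 2-subsets of X to the points of N), the structure
K_X +_μ N is a B(n+1)-configuration freely containing exactly one K_n-graph,
namely K_X. -/
theorem stmt_15 (n : ℕ) (Xt Zt : Type) [Fintype Xt] [DecidableEq Xt]
    [Fintype Zt] [DecidableEq Zt] (hXt : Fintype.card Xt = n)
    (N : PSTS Zt) (hN : IsBinomial N n)
    (hnoK : ∀ Y : Finset Zt, Y.card = n - 1 → ¬ FreelyContains N Y)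
    (μ : {e : Finset Xt // e.card = 2} → Zt) (hμ : Function.Bijective μ) :
    ∃ M : PSTS (Xt ⊕ Zt),
      M.lines = N.lines.image (fun L => L.image Sum.inr) ∪
        Finset.univ.image (fun e : {e : Finset Xt // e.card = 2} =>
          e.val.image Sum.inl ∪ {Sum.inr (μ e)}) ∧
      IsBinomial M (n + 1) ∧
      FreelyContains M (Finset.univ.image Sum.inl) ∧
      (∀ X' : Finset (Xt ⊕ Zt), X'.card = n → FreelyContains M X' →
        X' = Finset.univ.image Sum.inl) := by
  classical
  rcases Nat.lt_or_ge n 2 with hn | hn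
  · exact absurd (freely_empty N)
      (hnoK ∅ (by simp only [Finset.card_empty]; omega))
  -- main case : 2 ≤ n
  set side : {e : Finset Xt // e.card = 2} → Finset (Xt ⊕ Zt) :=
    fun e => e.val.image Sum.inl ∪ {Sum.inr (μ e)} with hside
  have hsideL : ∀ (e) (x : Xt), Sum.inl x ∈ side e ↔ x ∈ e.val := by
    intro e x; simp [hside]
  have hsideR : ∀ (e) (z : Zt), Sum.inr z ∈ side e ↔ z = μ e := by
    intro e z; simp [hside]
  have hsideCard : ∀ e, (side e).card = 3 := by
    intro e
    rw [hside]
    rw [Finset.card_union_of_disjoint (by simp [Finset.disjoint_left])]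
    rw [Finset.card_image_of_injective _ Sum.inl_injective, e.prop,
      Finset.card_singleton]
  have hsideInj : Function.Injective side := by
    intro e₁ e₂ h
    have hsub : e₁.val ⊆ e₂.val := by
      intro x hx
      have h1 : Sum.inl x ∈ side e₁ := (hsideL e₁ x).mpr hx
      rw [h] at h1
      exact (hsideL e₂ x).mp h1
    exact Subtype.ext (Finset.eq_of_subset_of_card_le hsub
      (by rw [e₁.prop, e₂.prop]))
  have himgInj : Function.Injective (fun L : Finset Zt => L.image (Sum.inr : Zt → Xt ⊕ Zt)) :=
    Finset.image_injective Sum.inr_injective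
  set Mlines : Finset (Finset (Xt ⊕ Zt)) :=
    N.lines.image (fun L => L.image (Sum.inr : Zt → Xt ⊕ Zt)) ∪
      Finset.univ.image side with hMlines
  have hdisj : Disjoint (N.lines.image (fun L => L.image (Sum.inr : Zt → Xt ⊕ Zt)))
      (Finset.univ.image side) := by
    rw [Finset.disjoint_left]
    intro L hL hL'
    obtain ⟨L₀, _, rfl⟩ := Finset.mem_image.mp hL
    obtain ⟨e, _, heq⟩ := Finset.mem_image.mp hL'
    obtain ⟨x, hx⟩ := Finset.card_pos.mp
      (show 0 < e.val.card by rw [e.prop]; norm_num)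
    have h1 : Sum.inl x ∈ side e := (hsideL e x).mpr hx
    rw [heq] at h1
    simp at h1
  have hlineInl : ∀ L ∈ Mlines, ∀ x : Xt, Sum.inl x ∈ L →
      ∃ e, L = side e ∧ x ∈ e.val := by
    intro L hL x hx
    rw [hMlines, Finset.mem_union] at hL
    rcases hL with hL | hL
    · obtain ⟨L₀, _, rfl⟩ := Finset.mem_image.mp hL
      simp at hx
    · obtain ⟨e, _, rfl⟩ := Finset.mem_image.mp hL
      exact ⟨e, rfl, (hsideL e x).mp hx⟩
  have hlineInr2 : ∀ L ∈ Mlines, ∀ z₁ z₂ : Zt, z₁ ≠ z₂ → Sum.inr z₁ ∈ L →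
      Sum.inr z₂ ∈ L → ∃ L₀ ∈ N.lines, L = L₀.image (Sum.inr : Zt → Xt ⊕ Zt) := by
    intro L hL z₁ z₂ hne h₁ h₂
    rw [hMlines, Finset.mem_union] at hL
    rcases hL with hL | hL
    · obtain ⟨L₀, hL₀, rfl⟩ := Finset.mem_image.mp hL
      exact ⟨L₀, hL₀, rfl⟩
    · obtain ⟨e, _, rfl⟩ := Finset.mem_image.mp hL
      exact absurd (((hsideR e z₁).mp h₁).trans ((hsideR e z₂).mp h₂).symm) hne
  -- PSTS axioms
  have hcard3 : ∀ L ∈ Mlines, L.card = 3 := by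
    intro L hL
    rw [hMlines, Finset.mem_union] at hL
    rcases hL with hL | hL
    · obtain ⟨L₀, hL₀, rfl⟩ := Finset.mem_image.mp hL
      rw [Finset.card_image_of_injective _ Sum.inr_injective]
      exact N.card3 L₀ hL₀
    · obtain ⟨e, _, rfl⟩ := Finset.mem_image.mp hL
      exact hsideCard e
  have huniq : ∀ L₁ ∈ Mlines, ∀ L₂ ∈ Mlines, ∀ a b : Xt ⊕ Zt, a ≠ b →
      a ∈ L₁ → b ∈ L₁ → a ∈ L₂ → b ∈ L₂ → L₁ = L₂ := by
    have hss : ∀ (e₁ e₂ : {e : Finset Xt // e.card = 2}) (a b : Xt ⊕ Zt),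
        a ≠ b → a ∈ side e₁ → b ∈ side e₁ → a ∈ side e₂ → b ∈ side e₂ →
        e₁ = e₂ := by
      intro e₁ e₂ a b hab ha1 hb1 ha2 hb2
      obtain x | z := a
      · obtain y | z := b
        · have hxy : x ≠ y := fun h => hab (by rw [h])
          have hx1 := (hsideL e₁ x).mp ha1
          have hy1 := (hsideL e₁ y).mp hb1
          have hx2 := (hsideL e₂ x).mp ha2
          have hy2 := (hsideL e₂ y).mp hb2
          have hc : ({x, y} : Finset Xt).card = 2 := by
            rw [Finset.card_insert_of_notMem (by simp [hxy]),
              Finset.card_singleton]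
          have h1 : ({x, y} : Finset Xt) = e₁.val :=
            Finset.eq_of_subset_of_card_le
              (by intro t ht; rcases Finset.mem_insert.mp ht with rfl | ht
                  · exact hx1
                  · rw [Finset.mem_singleton] at ht; subst ht; exact hy1)
              (by rw [e₁.prop, hc])
          have h2 : ({x, y} : Finset Xt) = e₂.val :=
            Finset.eq_of_subset_of_card_le
              (by intro t ht; rcases Finset.mem_insert.mp ht with rfl | ht
                  · exact hx2
                  · rw [Finset.mem_singleton] at ht; subst ht; exact hy2)
              (by rw [e₂.prop, hc])
          exact Subtype.ext (h1 ▸ h2)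
        · exact hμ.injective
            ((((hsideR e₁ z).mp hb1).symm).trans ((hsideR e₂ z).mp hb2))
      · exact hμ.injective
          ((((hsideR e₁ z).mp ha1).symm).trans ((hsideR e₂ z).mp ha2))
    intro L₁ h₁ L₂ h₂ a b hab ha1 hb1 ha2 hb2
    rw [hMlines, Finset.mem_union] at h₁ h₂
    rcases h₁ with h₁ | h₁ <;> rcases h₂ with h₂ | h₂
    · obtain ⟨L₀, hL₀, rfl⟩ := Finset.mem_image.mp h₁
      obtain ⟨M₀, hM₀, rfl⟩ := Finset.mem_image.mp h₂
      obtain ⟨a₀, ha₀, rfl⟩ := Finset.mem_image.mp ha1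
      obtain ⟨b₀, hb₀, rfl⟩ := Finset.mem_image.mp hb1
      have hab₀ : a₀ ≠ b₀ := fun h => hab (by rw [h])
      have ha₀' : a₀ ∈ M₀ := by simpa using ha2
      have hb₀' : b₀ ∈ M₀ := by simpa using hb2
      rw [N.unique L₀ hL₀ M₀ hM₀ a₀ b₀ hab₀ ha₀ hb₀ ha₀' hb₀']
    · obtain ⟨L₀, hL₀, rfl⟩ := Finset.mem_image.mp h₁
      obtain ⟨e, _, rfl⟩ := Finset.mem_image.mp h₂
      obtain ⟨a₀, _, rfl⟩ := Finset.mem_image.mp ha1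
      obtain ⟨b₀, _, rfl⟩ := Finset.mem_image.mp hb1
      exact absurd (by rw [(hsideR e a₀).mp ha2, (hsideR e b₀).mp hb2]) hab
    · obtain ⟨e, _, rfl⟩ := Finset.mem_image.mp h₁
      obtain ⟨L₀, hL₀, rfl⟩ := Finset.mem_image.mp h₂
      obtain ⟨a₀, _, rfl⟩ := Finset.mem_image.mp ha2
      obtain ⟨b₀, _, rfl⟩ := Finset.mem_image.mp hb2
      exact absurd (by rw [(hsideR e a₀).mp ha1, (hsideR e b₀).mp hb1]) hab
    · obtain ⟨e₁, _, rfl⟩ := Finset.mem_image.mp h₁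
      obtain ⟨e₂, _, rfl⟩ := Finset.mem_image.mp h₂
      rw [hss e₁ e₂ a b hab ha1 hb1 ha2 hb2]
  have hcountStar : ∀ x : Xt,
      (Finset.univ.filter (fun e : {e : Finset Xt // e.card = 2} => x ∈ e.val)).card
        = n - 1 := by
    intro x
    have hex : ∀ e ∈ Finset.univ.filter
        (fun e : {e : Finset Xt // e.card = 2} => x ∈ e.val),
        ∃ y, y ≠ x ∧ e.val = {x, y} := by
      intro e he
      rw [Finset.mem_filter] at he
      have h1 : (e.val.erase x).card = 1 := by
        rw [Finset.card_erase_of_mem he.2, e.prop]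
      obtain ⟨y, hy⟩ := Finset.card_eq_one.mp h1
      have hyx : y ≠ x := by
        have : y ∈ e.val.erase x := by rw [hy]; exact Finset.mem_singleton_self y
        exact (Finset.mem_erase.mp this).1
      refine ⟨y, hyx, ?_⟩
      rw [← Finset.insert_erase he.2, hy]
    have hbij : (Finset.univ.filter
        (fun e : {e : Finset Xt // e.card = 2} => x ∈ e.val)).card
          = (Finset.univ.erase x).card := by
      apply Finset.card_bij (fun e he => (hex e he).choose)
      · intro e he
        exact Finset.mem_erase.mpr ⟨(hex e he).choose_spec.1, Finset.mem_univ _⟩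
      · intro e₁ h₁ e₂ h₂ h
        apply Subtype.ext
        rw [(hex e₁ h₁).choose_spec.2, (hex e₂ h₂).choose_spec.2, h]
      · intro y hy
        have hyx := (Finset.mem_erase.mp hy).1
        have hc2 : ({x, y} : Finset Xt).card = 2 := by
          rw [Finset.card_insert_of_notMem (by simp [Ne.symm hyx]),
            Finset.card_singleton]
        have hmem : (⟨{x, y}, hc2⟩ : {e : Finset Xt // e.card = 2}) ∈
            Finset.univ.filter
              (fun e : {e : Finset Xt // e.card = 2} => x ∈ e.val) :=
          Finset.mem_filter.mpr ⟨Finset.mem_univ _, by simp⟩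
        refine ⟨⟨{x, y}, hc2⟩, hmem, ?_⟩
        have hspec := (hex ⟨{x, y}, hc2⟩ hmem).choose_spec
        have hymem : y ∈ ({x, (hex ⟨{x, y}, hc2⟩ hmem).choose} : Finset Xt) := by
          rw [← hspec.2]; simp
        rcases Finset.mem_insert.mp hymem with h | h
        · exact absurd h hyx
        · rw [Finset.mem_singleton] at h; exact h.symm
    rw [hbij, Finset.card_erase_of_mem (Finset.mem_univ x), Finset.card_univ, hXt]
  refine ⟨⟨Mlines, hcard3, huniq⟩, rfl, ?_, ?_, ?_⟩
  · refine ⟨?_, ?_, ?_⟩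
    · rw [Fintype.card_sum, hXt, hN.1, Nat.choose_succ_succ, Nat.choose_one_right]
    · show Mlines.card = (n+1).choose 3
      rw [hMlines, Finset.card_union_of_disjoint hdisj,
        Finset.card_image_of_injective _ himgInj,
        Finset.card_image_of_injective _ hsideInj, hN.2.1, Finset.card_univ,
        Fintype.card_finset_len, hXt, Nat.choose_succ_succ]
      exact Nat.add_comm _ _
    · intro p
      have hrk : pointRank ⟨Mlines, hcard3, huniq⟩ p
          = ((N.lines.filter
              (fun L₀ => p ∈ L₀.image (Sum.inr : Zt → Xt ⊕ Zt))).card)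
            + ((Finset.univ.filter (fun e => p ∈ side e)).card) := by
        show (Mlines.filter (fun L => p ∈ L)).card = _
        rw [hMlines, Finset.filter_union,
          Finset.card_union_of_disjoint (Finset.disjoint_filter_filter hdisj),
          Finset.filter_image, Finset.filter_image,
          Finset.card_image_of_injective _ himgInj,
          Finset.card_image_of_injective _ hsideInj]
      rw [hrk]
      obtain x | z := p
      · have h0 : (N.lines.filter
            (fun L₀ => Sum.inl x ∈ L₀.image (Sum.inr : Zt → Xt ⊕ Zt))) = ∅ :=
          Finset.filter_false_of_mem (by intro L₀ _; simp)
        rw [h0, Finset.card_empty]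
        have h1 : (Finset.univ.filter (fun e => Sum.inl x ∈ side e))
            = Finset.univ.filter
              (fun e : {e : Finset Xt // e.card = 2} => x ∈ e.val) :=
          Finset.filter_congr (by intro e _; rw [hsideL])
        rw [h1, hcountStar]
        omega
      · have h1 : (N.lines.filter
            (fun L₀ => Sum.inr z ∈ L₀.image (Sum.inr : Zt → Xt ⊕ Zt)))
            = N.lines.filter (fun L₀ => z ∈ L₀) :=
          Finset.filter_congr (by intro L₀ _; simp)
        have h2 : (Finset.univ.filter (fun e => Sum.inr z ∈ side e))
            = {(Equiv.ofBijective μ hμ).symm z} := by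
          ext e
          simp only [Finset.mem_filter, Finset.mem_univ, true_and, hsideR,
            Finset.mem_singleton]
          rw [Equiv.eq_symm_apply]
          exact ⟨fun h => h.symm, fun h => h.symm⟩
        rw [h1, h2, Finset.card_singleton]
        have hr := hN.2.2 z
        unfold pointRank at hr
        omega
  · constructor
    · intro a ha b hb hab
      obtain ⟨x, _, rfl⟩ := Finset.mem_image.mp ha
      obtain ⟨y, _, rfl⟩ := Finset.mem_image.mp hb
      have hxy : x ≠ y := fun h => hab (by rw [h])
      have hc2 : ({x, y} : Finset Xt).card = 2 := by
        rw [Finset.card_insert_of_notMem (by simp [hxy]), Finset.card_singleton]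
      refine ⟨side ⟨{x, y}, hc2⟩, ?_, ?_, ?_, ?_⟩
      · exact Finset.mem_union_right _
          (Finset.mem_image_of_mem side (Finset.mem_univ _))
      · exact (hsideL ⟨{x, y}, hc2⟩ x).mpr (by simp)
      · exact (hsideL ⟨{x, y}, hc2⟩ y).mpr (by simp)
      · have hI : side ⟨{x, y}, hc2⟩ ∩ (Finset.univ.image Sum.inl)
            = ({x, y} : Finset Xt).image Sum.inl := by
          ext p
          obtain w | w := p
          · simp [hside]
          · simp [hside]
        rw [hI, Finset.card_image_of_injective _ Sum.inl_injective, hc2]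
    · intro L₁ L₂ h₁ h₂ hne p hp₁ hp₂
      have hkey : ∀ L, IsSide ⟨Mlines, hcard3, huniq⟩
          (Finset.univ.image Sum.inl) L → ∃ e, L = side e := by
        intro L hL
        have hLm : L ∈ Mlines := hL.1
        rw [hMlines, Finset.mem_union] at hLm
        rcases hLm with h | h
        · obtain ⟨L₀, _, rfl⟩ := Finset.mem_image.mp h
          exfalso
          have h2 := hL.2
          have hI : (L₀.image (Sum.inr : Zt → Xt ⊕ Zt))
              ∩ (Finset.univ.image Sum.inl) = ∅ := by
            rw [Finset.eq_empty_iff_forall_notMem]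
            intro q hq
            obtain ⟨q1, q2⟩ := Finset.mem_inter.mp hq
            obtain ⟨z, _, rfl⟩ := Finset.mem_image.mp q1
            simp at q2
          rw [hI] at h2; simp at h2
        · obtain ⟨e, _, rfl⟩ := Finset.mem_image.mp h
          exact ⟨e, rfl⟩
      obtain ⟨e₁, rfl⟩ := hkey L₁ h₁
      obtain ⟨e₂, rfl⟩ := hkey L₂ h₂
      obtain w | w := p
      · exact Finset.mem_image_of_mem _ (Finset.mem_univ w)
      · exfalso
        exact hne (congrArg side (hμ.injective
          (((hsideR e₁ w).mp hp₁).symm.trans ((hsideR e₂ w).mp hp₂))))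
  · intro X' hX'card hX'free
    set A := Finset.univ.filter (fun x : Xt => Sum.inl x ∈ X') with hAdef
    set B := Finset.univ.filter (fun z : Zt => Sum.inr z ∈ X') with hBdef
    have hAmem : ∀ x : Xt, x ∈ A ↔ Sum.inl x ∈ X' := by
      intro x; simp [hAdef]
    have hBmem : ∀ z : Zt, z ∈ B ↔ Sum.inr z ∈ X' := by
      intro z; simp [hBdef]
    have hsplit : X' = A.image Sum.inl ∪ B.image Sum.inr := by
      ext p
      obtain x | z := p
      · simp [hAmem, hBmem]
      · simp [hAmem, hBmem]
    have hcards : A.card + B.card = n := by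
      rw [← hX'card, hsplit,
        Finset.card_union_of_disjoint (by simp [Finset.disjoint_left]),
        Finset.card_image_of_injective _ Sum.inl_injective,
        Finset.card_image_of_injective _ Sum.inr_injective]
    have hinterBI : ∀ L₀ : Finset Zt,
        (L₀.image (Sum.inr : Zt → Xt ⊕ Zt)) ∩ X' = (L₀ ∩ B).image Sum.inr := by
      intro L₀
      ext p
      obtain x | z := p
      · simp
      · simp [hBmem]
    have hBfree : FreelyContains N B := by
      constructor
      · intro z₁ h₁ z₂ h₂ hz12
        obtain ⟨L, hL, hm₁, hm₂, hLc⟩ := hX'free.1 (Sum.inr z₁) ((hBmem z₁).mp h₁)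
          (Sum.inr z₂) ((hBmem z₂).mp h₂) (by simp [hz12])
        obtain ⟨L₀, hL₀, rfl⟩ := hlineInr2 L hL z₁ z₂ hz12 hm₁ hm₂
        refine ⟨L₀, hL₀, by simpa using hm₁, by simpa using hm₂, ?_⟩
        rw [hinterBI, Finset.card_image_of_injective _ Sum.inr_injective] at hLc
        exact hLc
      · intro L₁ L₂ h₁ h₂ hne p hp₁ hp₂
        have hS : ∀ L : Finset Zt, IsSide N B L →
            IsSide (⟨Mlines, hcard3, huniq⟩ : PSTS (Xt ⊕ Zt)) X'
              (L.image (Sum.inr : Zt → Xt ⊕ Zt)) := by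
          intro L hL
          refine ⟨Finset.mem_union_left _ (Finset.mem_image_of_mem _ hL.1), ?_⟩
          rw [hinterBI, Finset.card_image_of_injective _ Sum.inr_injective]
          exact hL.2
        have := hX'free.2 _ _ (hS L₁ h₁) (hS L₂ h₂)
          (fun h => hne (himgInj h)) (Sum.inr p)
          (Finset.mem_image_of_mem _ hp₁) (Finset.mem_image_of_mem _ hp₂)
        exact (hBmem p).mpr this
    have hB : B = ∅ := by
      by_contra hBne
      obtain ⟨z, hz⟩ := Finset.nonempty_iff_ne_empty.mpr hBne
      set e₀ := (Equiv.ofBijective μ hμ).symm z with he₀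
      have hμe₀ : μ e₀ = z := (Equiv.ofBijective μ hμ).apply_symm_apply z
      have hAsub : A ⊆ e₀.val := by
        intro a ha
        obtain ⟨L, hL, haL, hzL, hLcard⟩ := hX'free.1 (Sum.inl a)
          ((hAmem a).mp ha) (Sum.inr z) ((hBmem z).mp hz) (by simp)
        obtain ⟨e, rfl, hae⟩ := hlineInl L hL a haL
        have h1 : z = μ e := (hsideR e z).mp hzL
        have h2 : e = e₀ := by
          rw [he₀, Equiv.eq_symm_apply]
          exact h1.symm
        rwa [← h2]
      have hAle : A.card ≤ 2 :=
        le_trans (Finset.card_le_card hAsub) (le_of_eq e₀.prop)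
      have hA2 : A.card ≠ 2 := by
        intro h2c
        obtain ⟨a, b, ha, hb, hab⟩ :=
          (Finset.one_lt_card_iff (s := A)).mp (by omega)
        obtain ⟨L, hL, haL, hbL, hLcard⟩ := hX'free.1 (Sum.inl a)
          ((hAmem a).mp ha) (Sum.inl b) ((hAmem b).mp hb) (by simp [hab])
        obtain ⟨e, rfl, hae⟩ := hlineInl L hL a haL
        have hbe : b ∈ e.val := (hsideL e b).mp hbL
        have hc2 : ({a, b} : Finset Xt).card = 2 := by
          rw [Finset.card_insert_of_notMem (by simp [hab]),
            Finset.card_singleton]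
        have hsubA : ({a, b} : Finset Xt) ⊆ A := by
          intro t ht
          rcases Finset.mem_insert.mp ht with rfl | ht
          · exact ha
          · rw [Finset.mem_singleton] at ht; subst ht; exact hb
        have hsube : ({a, b} : Finset Xt) ⊆ e.val := by
          intro t ht
          rcases Finset.mem_insert.mp ht with rfl | ht
          · exact hae
          · rw [Finset.mem_singleton] at ht; subst ht; exact hbe
        have heqA : ({a, b} : Finset Xt) = A :=
          Finset.eq_of_subset_of_card_le hsubA (by omega)
        have heqe : ({a, b} : Finset Xt) = e.val :=
          Finset.eq_of_subset_of_card_le hsube (by rw [e.prop, hc2])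
        have hee₀ : e = e₀ := Subtype.ext (by
          rw [← heqe]
          exact heqA.trans (Finset.eq_of_subset_of_card_le hAsub
            (by rw [e₀.prop, h2c])))
        have hzL : Sum.inr z ∈ side e := (hsideR e z).mpr (by rw [hee₀, hμe₀])
        have hsub3 : ({Sum.inl a, Sum.inl b, Sum.inr z} : Finset (Xt ⊕ Zt))
            ⊆ side e ∩ X' := by
          intro q hq
          simp only [Finset.mem_insert, Finset.mem_singleton] at hq
          rcases hq with rfl | rfl | rfl
          · exact Finset.mem_inter.mpr ⟨haL, (hAmem a).mp ha⟩
          · exact Finset.mem_inter.mpr ⟨hbL, (hAmem b).mp hb⟩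
          · exact Finset.mem_inter.mpr ⟨hzL, (hBmem z).mp hz⟩
        have hc3 : ({Sum.inl a, Sum.inl b, Sum.inr z} : Finset (Xt ⊕ Zt)).card
            = 3 := by
          rw [Finset.card_insert_of_notMem (by simp [hab]),
            Finset.card_insert_of_notMem (by simp), Finset.card_singleton]
        have := Finset.card_le_card hsub3
        omega
      rcases Nat.lt_or_ge A.card 1 with h0 | h1
      · have hBn : B.card = n := by omega
        exact hnoK (B.erase z)
          (by rw [Finset.card_erase_of_mem hz]; omega)
          (freely_erase N B hBfree z)
      · have hA1 : A.card = 1 := by omega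
        exact hnoK B (by omega) hBfree
    have hB0 : B.card = 0 := by rw [hB]; rfl
    have hAuniv : A = Finset.univ := Finset.eq_univ_of_card A (by rw [hXt]; omega)
    rw [hsplit, hB, hAuniv, Finset.image_empty, Finset.union_empty]
end
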